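/- arXiv:1112.1045 — 6 statements merged into one kernel-verified Lean document; each statement's English description precedes it below -/
import Mathlib

section
/- Let n1, n2, r, m, k1, k2, k2' be natural numbers and ε ∈ (0,1). Let TExt : {0,1}^{n1} × {0,1}^{n2} → {0,1}^m be a function and A_1, ..., A_r : {0,1}^{n2} → {0,1}^{n2} be r functions such that for every (n1,k1)-source X and every independent (n2,k2)-source Y, the joint distribution (TExt(X,Y), (TExt(X,A_i(Y)))_{i=1..r}) is ε-close to (U_m, (TExt(X,A_i(Y)))_{i=1..r}). Then for every (n1,k1)-source X and every (n2,k2')-source Y' independent of X, the joint distribution (TExt(X,Y'), (TExt(X,A_i(Y')))_{i=1..r}, Y') is 2^{(r+1)m}·(2^{k2−k2'+1}+ε)-close to (U_m, (TExt(X,A_i(Y')))_{i=1..r}, Y'). -/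
open Finset
open scoped Classical

noncomputable section

abbrev BS (n : ℕ) := Fin n → Bool

def uniformD (α : Type*) [Fintype α] : α → ℝ := fun _ => (Fintype.card α : ℝ)⁻¹

def prodD {α β : Type*} (p : α → ℝ) (q : β → ℝ) : α × β → ℝ := fun z => p z.1 * q z.2

def pushD {α β : Type*} [Fintype α] (f : α → β) (p : α → ℝ) : β → ℝ :=
  fun b => ∑ a, if f a = b then p a else 0

def SD {α : Type*} [Fintype α] (p q : α → ℝ) : ℝ := (∑ a, |p a - q a|) / 2

def IsDist {α : Type*} [Fintype α] (p : α → ℝ) : Prop := (∀ a, 0 ≤ p a) ∧ ∑ a, p a = 1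

def mEntGe {α : Type*} (p : α → ℝ) (k : ℝ) : Prop := ∀ a, p a ≤ (2:ℝ) ^ (-k)

def IsNME {X Y M : Type*} [Fintype X] [Fintype Y] [Fintype M]
    (E : X → Y → M) (k ε : ℝ) : Prop :=
  ∀ μX : X → ℝ, IsDist μX → mEntGe μX k →
    ∀ A : Y → Y, (∀ y, A y ≠ y) →
      SD (pushD (fun xy : X × Y => (E xy.1 xy.2, E xy.1 (A xy.2), xy.2)) (prodD μX (uniformD Y)))
         (prodD (uniformD M)
           (pushD (fun xy : X × Y => (E xy.1 (A xy.2), xy.2)) (prodD μX (uniformD Y)))) ≤ ε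

def IsNMEr {X Y M : Type*} [Fintype X] [Fintype Y] [Fintype M]
    (r : ℕ) (E : X → Y → M) (k ε : ℝ) : Prop :=
  ∀ μX : X → ℝ, IsDist μX → mEntGe μX k →
    ∀ A : Fin r → Y → Y, (∀ i y, A i y ≠ y) →
      SD (pushD (fun xy : X × Y =>
            (E xy.1 xy.2, fun i => E xy.1 (A i xy.2), xy.2)) (prodD μX (uniformD Y)))
         (prodD (uniformD M)
           (pushD (fun xy : X × Y =>
             ((fun i => E xy.1 (A i xy.2)), xy.2)) (prodD μX (uniformD Y)))) ≤ ε

lemma push_pair_eval {X Y W V : Type*} [Fintype X] [Fintype Y]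
    (E : X → Y → W) (f : X → Y → V) (μ : X → ℝ) (ν : Y → ℝ) (wv : W × V) :
    pushD (fun xy : X × Y => (E xy.1 xy.2, f xy.1 xy.2)) (prodD μ ν) wv
      = ∑ y, ν y * (∑ x, if (E x y, f x y) = wv then μ x else 0) := by
  unfold pushD prodD
  rw [Fintype.sum_prod_type, Finset.sum_comm]
  refine Finset.sum_congr rfl fun y _ => ?_
  rw [Finset.mul_sum]
  refine Finset.sum_congr rfl fun x _ => ?_
  simp only [mul_ite, mul_zero]
  ring_nf

lemma push_triple_eval {X Y W V : Type*} [Fintype X] [Fintype Y]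
    (E : X → Y → W) (f : X → Y → V) (μ : X → ℝ) (ν : Y → ℝ) (w : W) (v : V) (y : Y) :
    pushD (fun xy : X × Y => (E xy.1 xy.2, f xy.1 xy.2, xy.2)) (prodD μ ν) (w, v, y)
      = ν y * (∑ x, if (E x y, f x y) = (w, v) then μ x else 0) := by
  unfold pushD prodD
  rw [Fintype.sum_prod_type, Finset.sum_comm]
  rw [Finset.sum_eq_single y]
  · rw [Finset.mul_sum]
    refine Finset.sum_congr rfl fun x _ => ?_
    simp only [Prod.mk.injEq, mul_ite, mul_zero, and_true]
    ring_nf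
  · intro y' _ hy'
    apply Finset.sum_eq_zero
    intro x _
    simp [Prod.mk.injEq, hy']
  · simp

lemma push_single_eval {X Y V : Type*} [Fintype X] [Fintype Y]
    (f : X → Y → V) (μ : X → ℝ) (ν : Y → ℝ) (v : V) (y : Y) :
    pushD (fun xy : X × Y => (f xy.1 xy.2, xy.2)) (prodD μ ν) (v, y)
      = ν y * (∑ x, if f x y = v then μ x else 0) := by
  unfold pushD prodD
  rw [Fintype.sum_prod_type, Finset.sum_comm]
  rw [Finset.sum_eq_single y]
  · rw [Finset.mul_sum]
    refine Finset.sum_congr rfl fun x _ => ?_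
    simp only [Prod.mk.injEq, mul_ite, mul_zero, and_true]
    ring_nf
  · intro y' _ hy'
    apply Finset.sum_eq_zero
    intro x _
    simp [Prod.mk.injEq, hy']
  · simp

lemma push_out_eval {X Y V : Type*} [Fintype X] [Fintype Y]
    (f : X → Y → V) (μ : X → ℝ) (ν : Y → ℝ) (v : V) :
    pushD (fun xy : X × Y => f xy.1 xy.2) (prodD μ ν) v
      = ∑ y, ν y * (∑ x, if f x y = v then μ x else 0) := by
  unfold pushD prodD
  rw [Fintype.sum_prod_type, Finset.sum_comm]
  refine Finset.sum_congr rfl fun y _ => ?_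
  rw [Finset.mul_sum]
  refine Finset.sum_congr rfl fun x _ => ?_
  simp only [mul_ite, mul_zero]
  ring_nf

lemma core {X Y W V : Type*} [Fintype X] [Fintype Y] [Fintype W] [Fintype V] [Nonempty W]
    (E : X → Y → W) (f : X → Y → V) (μX : X → ℝ) (hdX : IsDist μX)
    (k2 k2' ε : ℝ) (hε : 0 < ε)
    (H : ∀ ν : Y → ℝ, IsDist ν → mEntGe ν k2 →
        SD (pushD (fun xy : X × Y => (E xy.1 xy.2, f xy.1 xy.2)) (prodD μX ν))
           (prodD (uniformD W) (pushD (fun xy : X × Y => f xy.1 xy.2) (prodD μX ν))) ≤ ε)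
    (μY' : Y → ℝ) (hd' : IsDist μY') (hk' : mEntGe μY' k2') :
    SD (pushD (fun xy : X × Y => (E xy.1 xy.2, f xy.1 xy.2, xy.2)) (prodD μX μY'))
       (prodD (uniformD W) (pushD (fun xy : X × Y => (f xy.1 xy.2, xy.2)) (prodD μX μY')))
    ≤ (Fintype.card W * Fintype.card V : ℝ) * ((2:ℝ) ^ (k2 - k2') + ε) := by
  set u : ℝ := (Fintype.card W : ℝ)⁻¹ with hu
  set p : Y → W × V → ℝ := fun y wv => ∑ x, if (E x y, f x y) = wv then μX x else 0 with hp
  set q : Y → V → ℝ := fun y v => ∑ x, if f x y = v then μX x else 0 with hq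
  set g : W × V → Y → ℝ := fun wv y => p y wv - u * q y wv.2 with hg
  have cardW1 : (1:ℝ) ≤ (Fintype.card W : ℝ) := by
    exact_mod_cast Fintype.card_pos
  have hu0 : 0 ≤ u := by positivity
  have hu1 : u ≤ 1 := by
    rw [hu]
    exact inv_le_one_of_one_le₀ cardW1
  have hp0 : ∀ y wv, 0 ≤ p y wv := by
    intro y wv
    apply Finset.sum_nonneg
    intro x _
    split <;> simp [hdX.1 x]
  have hp1 : ∀ y wv, p y wv ≤ 1 := by
    intro y wv
    rw [hp]
    calc (∑ x, if (E x y, f x y) = wv then μX x else 0) ≤ ∑ x, μX x := by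
          apply Finset.sum_le_sum
          intro x _
          split <;> simp [hdX.1 x]
      _ = 1 := hdX.2
  have hq0 : ∀ y v, 0 ≤ q y v := by
    intro y v
    apply Finset.sum_nonneg
    intro x _
    split <;> simp [hdX.1 x]
  have hq1 : ∀ y v, q y v ≤ 1 := by
    intro y v
    rw [hq]
    calc (∑ x, if f x y = v then μX x else 0) ≤ ∑ x, μX x := by
          apply Finset.sum_le_sum
          intro x _
          split <;> simp [hdX.1 x]
      _ = 1 := hdX.2
  have habs : ∀ wv y, |g wv y| ≤ 1 := by
    intro wv y
    rw [abs_le]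
    constructor
    · have h1 := hp0 y wv
      have h2 : u * q y wv.2 ≤ 1 := by
        calc u * q y wv.2 ≤ 1 * 1 := by
              apply mul_le_mul hu1 (hq1 y wv.2) (hq0 y wv.2) zero_le_one
          _ = 1 := by ring
      simp only [hg]
      linarith
    · have h1 := hp1 y wv
      have h2 : 0 ≤ u * q y wv.2 := mul_nonneg hu0 (hq0 y wv.2)
      simp only [hg]
      linarith
  -- key consequence of H
  have hB : ∀ ν : Y → ℝ, IsDist ν → mEntGe ν k2 → ∀ wv : W × V,
      |∑ y, ν y * g wv y| ≤ 2 * ε := by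
    intro ν h1 h2 wv
    have hSD := H ν h1 h2
    set D1 := pushD (fun xy : X × Y => (E xy.1 xy.2, f xy.1 xy.2)) (prodD μX ν) with hD1
    set D2 := prodD (uniformD W) (pushD (fun xy : X × Y => f xy.1 xy.2) (prodD μX ν)) with hD2
    have e1 : D1 wv = ∑ y, ν y * p y wv := push_pair_eval E f μX ν wv
    have e2 : D2 wv = u * ∑ y, ν y * q y wv.2 := by
      rw [hD2]
      show uniformD W wv.1 * pushD _ _ wv.2 = _
      rw [push_out_eval]
      rfl
    have ediff : D1 wv - D2 wv = ∑ y, ν y * g wv y := by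
      rw [e1, e2, Finset.mul_sum, ← Finset.sum_sub_distrib]
      refine Finset.sum_congr rfl fun y _ => ?_
      simp only [hg]
      ring
    have hone : |D1 wv - D2 wv| ≤ ∑ z, |D1 z - D2 z| :=
      Finset.single_le_sum (f := fun z => |D1 z - D2 z|) (fun z _ => abs_nonneg _)
        (Finset.mem_univ wv)
    have : SD D1 D2 = (∑ z, |D1 z - D2 z|) / 2 := rfl
    rw [← ediff]
    linarith
  -- bad sets are small
  have hCard : ∀ h : Y → ℝ, (∀ ν : Y → ℝ, IsDist ν → mEntGe ν k2 → |∑ y, ν y * h y| ≤ 2 * ε) →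
      ∀ B : Finset Y, (∀ y ∈ B, 2 * ε < h y) → (B.card : ℝ) ≤ (2:ℝ) ^ k2 := by
    intro h hh B hBfilt
    by_contra hc
    push_neg at hc
    have h2k : (0:ℝ) < (2:ℝ) ^ k2 := Real.rpow_pos_of_pos two_pos k2
    have hcard0 : (0:ℝ) < (B.card : ℝ) := lt_trans h2k hc
    have hcardnat : 0 < B.card := by exact_mod_cast hcard0
    have hBne : B.Nonempty := Finset.card_pos.mp hcardnat
    set ν : Y → ℝ := fun y => if y ∈ B then (B.card : ℝ)⁻¹ else 0 with hν
    have hν1 : IsDist ν := by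
      constructor
      · intro y
        by_cases hyB : y ∈ B <;> simp [hν, hyB]
      · simp only [hν]
        rw [Finset.sum_ite_mem, Finset.univ_inter, Finset.sum_const, nsmul_eq_mul]
        field_simp
    have hν2 : mEntGe ν k2 := by
      intro y
      show (if y ∈ B then ((B.card:ℝ))⁻¹ else 0) ≤ _
      split
      · rw [Real.rpow_neg (by norm_num : (0:ℝ) ≤ 2)]
        exact inv_anti₀ h2k (le_of_lt hc)
      · positivity
    have hle := hh ν hν1 hν2
    have hsum : ∑ y, ν y * h y = (B.card : ℝ)⁻¹ * ∑ y ∈ B, h y := by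
      calc ∑ y, ν y * h y
          = ∑ y, (if y ∈ B then (B.card : ℝ)⁻¹ * h y else 0) :=
            Finset.sum_congr rfl fun y _ => by by_cases hyB : y ∈ B <;> simp [hν, hyB]
        _ = ∑ y ∈ Finset.univ ∩ B, (B.card : ℝ)⁻¹ * h y := Finset.sum_ite_mem _ _ _
        _ = (B.card : ℝ)⁻¹ * ∑ y ∈ B, h y := by rw [Finset.univ_inter, Finset.mul_sum]
    have hlt : 2 * ε < ∑ y, ν y * h y := by
      rw [hsum]
      have hs : (B.card : ℝ) * (2 * ε) < ∑ y ∈ B, h y := by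
        have := Finset.sum_lt_sum_of_nonempty hBne hBfilt
        simpa [Finset.sum_const, nsmul_eq_mul] using this
      calc 2 * ε = (B.card : ℝ)⁻¹ * ((B.card : ℝ) * (2 * ε)) := by field_simp
        _ < (B.card : ℝ)⁻¹ * ∑ y ∈ B, h y := by
            exact mul_lt_mul_of_pos_left hs (by positivity)
    have := le_abs_self (∑ y, ν y * h y)
    linarith
  -- per-(w,v) bound
  have hC : ∀ wv : W × V, ∑ y, μY' y * |g wv y| ≤ (2:ℝ) ^ (k2 - k2') * 2 + 2 * ε := by
    intro wv
    set Bp : Finset Y := Finset.univ.filter (fun y => 2 * ε < g wv y) with hBp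
    set Bm : Finset Y := Finset.univ.filter (fun y => 2 * ε < -(g wv y)) with hBm
    have hcp : (Bp.card : ℝ) ≤ (2:ℝ) ^ k2 := by
      apply hCard (g wv) (fun ν h1 h2 => hB ν h1 h2 wv)
      intro y hy
      exact (Finset.mem_filter.mp hy).2
    have hcm : (Bm.card : ℝ) ≤ (2:ℝ) ^ k2 := by
      apply hCard (fun y => -(g wv y))
      · intro ν h1 h2
        have := hB ν h1 h2 wv
        calc |∑ y, ν y * -(g wv y)| = |-(∑ y, ν y * g wv y)| := by
              rw [← Finset.sum_neg_distrib]
              congr 1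
              exact Finset.sum_congr rfl fun y _ => by ring
          _ ≤ 2 * ε := by rw [abs_neg]; exact this
      · intro y hy
        exact (Finset.mem_filter.mp hy).2
    have hpoint : ∀ y, μY' y * |g wv y|
        ≤ (if y ∈ Bp ∪ Bm then (2:ℝ) ^ (-(k2':ℝ)) else 0) + μY' y * (2 * ε) := by
      intro y
      by_cases hy : y ∈ Bp ∪ Bm
      · rw [if_pos hy]
        have h1 : μY' y * |g wv y| ≤ (2:ℝ) ^ (-(k2':ℝ)) * 1 :=
          mul_le_mul (hk' y) (habs wv y) (abs_nonneg _) (le_of_lt (Real.rpow_pos_of_pos two_pos _))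
        have h2 : 0 ≤ μY' y * (2 * ε) := mul_nonneg (hd'.1 y) (by linarith)
        linarith
      · rw [if_neg hy]
        simp only [Finset.mem_union, hBp, hBm, Finset.mem_filter, Finset.mem_univ, true_and,
          not_or, not_lt] at hy
        have hgle : |g wv y| ≤ 2 * ε := by
          rw [abs_le]
          constructor <;> linarith [hy.1, hy.2]
        calc μY' y * |g wv y| ≤ μY' y * (2 * ε) :=
              mul_le_mul_of_nonneg_left hgle (hd'.1 y)
          _ ≤ 0 + μY' y * (2 * ε) := by linarith
    calc ∑ y, μY' y * |g wv y|
        ≤ ∑ y, ((if y ∈ Bp ∪ Bm then (2:ℝ) ^ (-(k2':ℝ)) else 0) + μY' y * (2 * ε)) :=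
          Finset.sum_le_sum fun y _ => hpoint y
      _ = ((Bp ∪ Bm).card : ℝ) * (2:ℝ) ^ (-(k2':ℝ)) + (∑ y, μY' y) * (2 * ε) := by
          rw [Finset.sum_add_distrib, Finset.sum_ite_mem, Finset.univ_inter, Finset.sum_const,
            nsmul_eq_mul, ← Finset.sum_mul]
      _ ≤ ((2:ℝ) ^ k2 + (2:ℝ) ^ k2) * (2:ℝ) ^ (-(k2':ℝ)) + 1 * (2 * ε) := by
          have hcu : ((Bp ∪ Bm).card : ℝ) ≤ (2:ℝ) ^ k2 + (2:ℝ) ^ k2 := by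
            have := Finset.card_union_le Bp Bm
            have : ((Bp ∪ Bm).card : ℝ) ≤ (Bp.card : ℝ) + (Bm.card : ℝ) := by exact_mod_cast this
            linarith
          have h2 : (0:ℝ) ≤ (2:ℝ) ^ (-(k2':ℝ)) := le_of_lt (Real.rpow_pos_of_pos two_pos _)
          rw [hd'.2]
          have := mul_le_mul_of_nonneg_right hcu h2
          linarith
      _ = (2:ℝ) ^ (k2 - k2') * 2 + 2 * ε := by
          have e : (2:ℝ) ^ (k2 - k2') = (2:ℝ) ^ k2 * (2:ℝ) ^ (-(k2':ℝ)) := by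
            rw [← Real.rpow_add two_pos, sub_eq_add_neg]
          rw [e]
          ring
  -- decompose SD
  have hA : SD (pushD (fun xy : X × Y => (E xy.1 xy.2, f xy.1 xy.2, xy.2)) (prodD μX μY'))
       (prodD (uniformD W) (pushD (fun xy : X × Y => (f xy.1 xy.2, xy.2)) (prodD μX μY')))
      = (∑ wv : W × V, ∑ y, μY' y * |g wv y|) / 2 := by
    unfold SD
    congr 1
    rw [Fintype.sum_prod_type, Fintype.sum_prod_type]
    refine Finset.sum_congr rfl fun w _ => ?_
    rw [Fintype.sum_prod_type]
    refine Finset.sum_congr rfl fun v _ => ?_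
    refine Finset.sum_congr rfl fun y _ => ?_
    rw [push_triple_eval E f μX μY' w v y]
    have e2 : prodD (uniformD W) (pushD (fun xy : X × Y => (f xy.1 xy.2, xy.2)) (prodD μX μY')) (w, v, y)
        = u * (μY' y * q y v) := by
      show uniformD W w * pushD _ _ (v, y) = _
      rw [push_single_eval]
      rfl
    rw [e2]
    have : μY' y * p y (w, v) - u * (μY' y * q y v) = μY' y * g (w, v) y := by
      simp only [hg]
      ring
    rw [this, abs_mul, abs_of_nonneg (hd'.1 y)]
  rw [hA]
  have hcardWV : (0:ℝ) ≤ (Fintype.card W * Fintype.card V : ℝ) := by positivity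
  have hsum : ∑ wv : W × V, ∑ y, μY' y * |g wv y|
      ≤ (Fintype.card (W × V) : ℝ) * ((2:ℝ) ^ (k2 - k2') * 2 + 2 * ε) := by
    calc ∑ wv : W × V, ∑ y, μY' y * |g wv y|
        ≤ ∑ _wv : W × V, ((2:ℝ) ^ (k2 - k2') * 2 + 2 * ε) :=
          Finset.sum_le_sum fun wv _ => hC wv
      _ = (Fintype.card (W × V) : ℝ) * ((2:ℝ) ^ (k2 - k2') * 2 + 2 * ε) := by
          rw [Finset.sum_const, nsmul_eq_mul]
          rfl
  rw [Fintype.card_prod] at hsum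
  push_cast at hsum
  calc (∑ wv : W × V, ∑ y, μY' y * |g wv y|) / 2
      ≤ ((Fintype.card W : ℝ) * (Fintype.card V : ℝ) * ((2:ℝ) ^ (k2 - k2') * 2 + 2 * ε)) / 2 := by
        linarith
    _ = (Fintype.card W * Fintype.card V : ℝ) * ((2:ℝ) ^ (k2 - k2') + ε) := by
        push_cast
        ring

theorem stmt_0
    (n1 n2 r m k1 k2 k2' : ℕ) (ε : ℝ) (hε0 : 0 < ε) (hε1 : ε < 1)
    (TExt : BS n1 → BS n2 → BS m) (A : Fin r → BS n2 → BS n2)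
    (hTExt : ∀ (μX : BS n1 → ℝ) (μY : BS n2 → ℝ),
      IsDist μX → mEntGe μX (k1:ℝ) → IsDist μY → mEntGe μY (k2:ℝ) →
      SD (pushD (fun xy : BS n1 × BS n2 =>
            (TExt xy.1 xy.2, fun i : Fin r => TExt xy.1 (A i xy.2))) (prodD μX μY))
         (prodD (uniformD (BS m))
            (pushD (fun xy : BS n1 × BS n2 =>
              fun i : Fin r => TExt xy.1 (A i xy.2)) (prodD μX μY)))
        ≤ ε) :
    ∀ (μX : BS n1 → ℝ) (μY' : BS n2 → ℝ),
      IsDist μX → mEntGe μX (k1:ℝ) → IsDist μY' → mEntGe μY' (k2':ℝ) →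
      SD (pushD (fun xy : BS n1 × BS n2 =>
            (TExt xy.1 xy.2, (fun i : Fin r => TExt xy.1 (A i xy.2)), xy.2)) (prodD μX μY'))
         (prodD (uniformD (BS m))
            (pushD (fun xy : BS n1 × BS n2 =>
              ((fun i : Fin r => TExt xy.1 (A i xy.2)), xy.2)) (prodD μX μY')))
        ≤ (2:ℝ) ^ (((r:ℝ) + 1) * (m:ℝ)) * ((2:ℝ) ^ ((k2:ℝ) - (k2':ℝ) + 1) + ε) := by
  intro μX μY' hdX hkX hdY hkY
  have h := core (W := BS m) (V := Fin r → BS m) TExt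
    (fun x y => fun i : Fin r => TExt x (A i y)) μX hdX (k2:ℝ) (k2':ℝ) ε hε0
    (fun ν h1 h2 => hTExt μX ν hdX hkX h1 h2) μY' hdY hkY
  refine le_trans h ?_
  have hcard : (Fintype.card (BS m) * Fintype.card (Fin r → BS m) : ℝ)
      = (2:ℝ) ^ (((r:ℝ) + 1) * (m:ℝ)) := by
    have c1 : Fintype.card (BS m) = 2 ^ m := by
      simp [BS]
    have c2 : Fintype.card (Fin r → BS m) = (2 ^ m) ^ r := by
      rw [Fintype.card_fun, c1, Fintype.card_fin]
    rw [c1, c2]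
    have : ((2:ℕ) ^ m * ((2:ℕ) ^ m) ^ r : ℝ) = (2:ℝ) ^ (m * (r + 1)) := by
      push_cast
      ring
    push_cast
    rw [show (2:ℝ) ^ m * ((2:ℝ) ^ m) ^ r = (2:ℝ) ^ (m * (r + 1)) by ring]
    rw [← Real.rpow_natCast (2:ℝ) (m * (r + 1))]
    congr 1
    push_cast
    ring
  rw [hcard]
  have hmono : (2:ℝ) ^ ((k2:ℝ) - (k2':ℝ)) + ε ≤ (2:ℝ) ^ ((k2:ℝ) - (k2':ℝ) + 1) + ε := by
    have := Real.rpow_le_rpow_of_exponent_le (one_le_two)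
      (show (k2:ℝ) - (k2':ℝ) ≤ (k2:ℝ) - (k2':ℝ) + 1 by linarith)
    linarith
  exact mul_le_mul_of_nonneg_left hmono (le_of_lt (Real.rpow_pos_of_pos two_pos _))

end
end

section
/- Let p be a prime, l a natural number, and let X and Y be independent random variables taking values in F_p^l with H∞(X) ≥ k1 and H∞(Y) ≥ k2. Let Z = X·Y be the inner product over F_p, and for r ∈ F_p let e_r(s) = e^{2πi·rs/p} (where rs is computed in F_p and lifted to {0,...,p−1}). Then for every nontrivial character e_r (i.e., r ≠ 0), |E_{X,Y}[e_r(Z)]|² ≤ p^l · 2^{−(k1+k2)}. -/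
open Finset
open scoped Classical

noncomputable section

/-- The standard inner product over `ZMod p`. -/
def ipZ {p l : ℕ} (x y : Fin l → ZMod p) : ZMod p := ∑ i, x i * y i

/-- The additive character `e_r(s) = exp(2πi·(r·s)/p)` of `ZMod p`. -/
def chr (p : ℕ) (r s : ZMod p) : ℂ :=
  Complex.exp (2 * Real.pi * Complex.I * ((r * s).val : ℂ) / (p : ℂ))

section Stmt2Aux

lemma addChar_map_sum {A M : Type*} [AddCommMonoid A] [CommMonoid M] (ψ : AddChar A M)
    {ι : Type*} (s : Finset ι) (f : ι → A) :
    ψ (∑ i ∈ s, f i) = ∏ i ∈ s, ψ (f i) := by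
  induction s using Finset.cons_induction with
  | empty => simp
  | cons a s ha ih => rw [Finset.sum_cons, Finset.prod_cons, AddChar.map_add_eq_mul, ih]

lemma chr_eq_stdAddChar {p : ℕ} [NeZero p] (r s : ZMod p) :
    chr p r s = ZMod.stdAddChar (r * s) := by
  rw [ZMod.stdAddChar_apply, ZMod.toCircle_apply, chr]

lemma stdAddChar_abs {p : ℕ} [NeZero p] (a : ZMod p) :
    ‖ZMod.stdAddChar a‖ = 1 := by
  rw [ZMod.stdAddChar_apply]; exact Circle.norm_coe _

lemma stdAddChar_conj {p : ℕ} [NeZero p] (a : ZMod p) :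
    (starRingEnd ℂ) (ZMod.stdAddChar a) = ZMod.stdAddChar (-a) := by
  rw [AddChar.map_neg_eq_inv, Complex.inv_eq_conj]
  rw [stdAddChar_abs]

lemma ipZ_sub {p l : ℕ} (x y y' : Fin l → ZMod p) :
    ipZ x (y - y') = ipZ x y - ipZ x y' := by
  simp [ipZ, mul_sub, Finset.sum_sub_distrib]

set_option maxHeartbeats 1600000 in
lemma sum_chr_orth {p l : ℕ} [NeZero p] (hp : p.Prime) {r : ZMod p} (hr : r ≠ 0)
    (d : Fin l → ZMod p) :
    ∑ x : Fin l → ZMod p, ZMod.stdAddChar (r * ipZ x d)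
      = if d = 0 then (p : ℂ) ^ l else 0 := by
  haveI : Fact p.Prime := ⟨hp⟩
  have h1 : ∀ x : Fin l → ZMod p, ZMod.stdAddChar (r * ipZ x d)
      = ∏ i, ZMod.stdAddChar ((r * d i) * x i) := by
    intro x
    rw [ipZ, Finset.mul_sum, addChar_map_sum]
    refine Finset.prod_congr rfl fun i _ => ?_
    ring_nf
  have h2 : ∑ x : Fin l → ZMod p, ∏ i, ZMod.stdAddChar ((r * d i) * x i)
      = ∏ i, ∑ s : ZMod p, ZMod.stdAddChar ((r * d i) * s) :=
    (Fintype.prod_sum (fun (i : Fin l) (s : ZMod p) => ZMod.stdAddChar ((r * d i) * s))).symm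
  simp only [h1, h2]
  by_cases hd : d = 0
  · simp only [hd, if_pos rfl, Pi.zero_apply, mul_zero, zero_mul,
      AddChar.map_zero_eq_one, Finset.sum_const, Finset.card_univ, ZMod.card, nsmul_eq_mul,
      mul_one, Finset.prod_const, Fintype.card_fin, if_true]
  · rw [if_neg hd]
    obtain ⟨i, hi⟩ : ∃ i, d i ≠ 0 := by
      by_contra h
      push_neg at h
      exact hd (funext fun i => h i)
    refine Finset.prod_eq_zero (Finset.mem_univ i) ?_
    have hrd : r * d i ≠ 0 := mul_ne_zero hr hi
    have hne : (ZMod.stdAddChar (N := p)).mulShift (r * d i) ≠ 1 :=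
      ZMod.isPrimitive_stdAddChar p hrd
    have := AddChar.sum_eq_zero_of_ne_one hne
    simpa [AddChar.mulShift_apply] using this

end Stmt2Aux

theorem stmt_2
    (p l : ℕ) [NeZero p] (hp : p.Prime) (k1 k2 : ℝ)
    (μX μY : (Fin l → ZMod p) → ℝ)
    (hX : IsDist μX) (hY : IsDist μY)
    (hk1 : mEntGe μX k1) (hk2 : mEntGe μY k2)
    (r : ZMod p) (hr : r ≠ 0) :
    ‖∑ x, ∑ y, ((μX x * μY y : ℝ) : ℂ) * chr p r (ipZ x y)‖ ^ 2
      ≤ (p:ℝ) ^ l * (2:ℝ) ^ (-(k1 + k2)) := by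
  haveI : Fact p.Prime := ⟨hp⟩
  set g : (Fin l → ZMod p) → ℂ :=
    fun x => ∑ y, (μY y : ℂ) * ZMod.stdAddChar (r * ipZ x y) with hg
  -- rewrite the double sum
  have hS : (∑ x, ∑ y, ((μX x * μY y : ℝ) : ℂ) * chr p r (ipZ x y))
      = ∑ x, (μX x : ℂ) * g x := by
    refine Finset.sum_congr rfl fun x _ => ?_
    rw [hg, Finset.mul_sum]
    refine Finset.sum_congr rfl fun y _ => ?_
    rw [chr_eq_stdAddChar]
    push_cast
    ring
  rw [hS]
  -- Step A: triangle inequality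
  have hA : ‖∑ x, (μX x : ℂ) * g x‖ ≤ ∑ x, μX x * ‖g x‖ := by
    refine le_trans (norm_sum_le _ _) (le_of_eq ?_)
    refine Finset.sum_congr rfl fun x _ => ?_
    rw [norm_mul, Complex.norm_of_nonneg (hX.1 x)]
  -- Step D: Parseval-type identity
  have hD : ∑ x, ‖g x‖ ^ 2 = (p : ℝ) ^ l * ∑ y, μY y ^ 2 := by
    have hC : ∑ x, (g x * (starRingEnd ℂ) (g x))
        = (p : ℂ) ^ l * ∑ y, ((μY y : ℂ)) ^ 2 := by
      have expand : ∀ x, g x * (starRingEnd ℂ) (g x)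
          = ∑ y, ∑ y', ((μY y : ℂ) * (μY y' : ℂ)) * ZMod.stdAddChar (r * ipZ x (y - y')) := by
        intro x
        rw [hg, map_sum, Finset.sum_mul_sum]
        refine Finset.sum_congr rfl fun y _ => Finset.sum_congr rfl fun y' _ => ?_
        rw [map_mul (starRingEnd ℂ), Complex.conj_ofReal, stdAddChar_conj]
        have : r * ipZ x (y - y') = r * ipZ x y + -(r * ipZ x y') := by
          rw [ipZ_sub]; ring
        rw [this, AddChar.map_add_eq_mul]
        ring
      calc ∑ x, (g x * (starRingEnd ℂ) (g x))
          = ∑ x, ∑ y, ∑ y', ((μY y : ℂ) * (μY y' : ℂ)) * ZMod.stdAddChar (r * ipZ x (y - y')) := by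
            exact Finset.sum_congr rfl fun x _ => expand x
        _ = ∑ y, ∑ y', ((μY y : ℂ) * (μY y' : ℂ)) * ∑ x, ZMod.stdAddChar (r * ipZ x (y - y')) := by
            rw [Finset.sum_comm]
            refine Finset.sum_congr rfl fun y _ => ?_
            rw [Finset.sum_comm]
            refine Finset.sum_congr rfl fun y' _ => ?_
            rw [Finset.mul_sum]
        _ = ∑ y, ∑ y', ((μY y : ℂ) * (μY y' : ℂ)) *
              (if y - y' = 0 then (p : ℂ) ^ l else 0) := by
            refine Finset.sum_congr rfl fun y _ => Finset.sum_congr rfl fun y' _ => ?_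
            rw [sum_chr_orth hp hr]
        _ = (p : ℂ) ^ l * ∑ y, ((μY y : ℂ)) ^ 2 := by
            rw [Finset.mul_sum]
            refine Finset.sum_congr rfl fun y _ => ?_
            rw [Finset.sum_eq_single y]
            · simp [sq]; ring
            · intro y' _ hy'
              rw [if_neg (by simpa [sub_eq_zero] using (Ne.symm hy')), mul_zero]
            · intro h; exact absurd (Finset.mem_univ y) h
    have lhs_eq : ∀ x : Fin l → ZMod p,
        ‖g x‖ ^ 2 = (g x * (starRingEnd ℂ) (g x)).re := by
      intro x
      rw [Complex.mul_conj, Complex.sq_norm]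
      simp
    have hcast : ((p : ℂ) ^ l * ∑ y, ((μY y : ℂ)) ^ 2)
        = (((p : ℝ) ^ l * ∑ y, μY y ^ 2 : ℝ) : ℂ) := by
      push_cast
      ring
    calc ∑ x, ‖g x‖ ^ 2
        = ∑ x, (g x * (starRingEnd ℂ) (g x)).re :=
          Finset.sum_congr rfl fun x _ => lhs_eq x
      _ = (∑ x, g x * (starRingEnd ℂ) (g x)).re := (Complex.re_sum _ _).symm
      _ = (p : ℝ) ^ l * ∑ y, μY y ^ 2 := by rw [hC, hcast, Complex.ofReal_re]
  -- Step B: Cauchy-Schwarz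
  have hB : (∑ x, μX x * ‖g x‖) ^ 2
      ≤ (∑ x, μX x) * (∑ x, μX x * ‖g x‖ ^ 2) := by
    have := sum_mul_sq_le_sq_mul_sq Finset.univ (fun x => Real.sqrt (μX x))
      (fun x => Real.sqrt (μX x) * ‖g x‖)
    calc (∑ x, μX x * ‖g x‖) ^ 2
        = (∑ x, Real.sqrt (μX x) * (Real.sqrt (μX x) * ‖g x‖)) ^ 2 := by
          congr 1
          refine Finset.sum_congr rfl fun x _ => ?_
          rw [← mul_assoc, Real.mul_self_sqrt (hX.1 x)]
      _ ≤ (∑ x, Real.sqrt (μX x) ^ 2) * (∑ x, (Real.sqrt (μX x) * ‖g x‖) ^ 2) :=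
          this
      _ = (∑ x, μX x) * (∑ x, μX x * ‖g x‖ ^ 2) := by
          congr 1
          · exact Finset.sum_congr rfl fun x _ => Real.sq_sqrt (hX.1 x)
          · refine Finset.sum_congr rfl fun x _ => ?_
            rw [mul_pow, Real.sq_sqrt (hX.1 x)]
  -- Step C: bound by min-entropy
  have hC1 : ∑ x, μX x * ‖g x‖ ^ 2 ≤ (2:ℝ) ^ (-k1) * ∑ x, ‖g x‖ ^ 2 := by
    rw [Finset.mul_sum]
    refine Finset.sum_le_sum fun x _ => ?_
    exact mul_le_mul_of_nonneg_right (hk1 x) (sq_nonneg _)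
  have hC2 : ∑ y, μY y ^ 2 ≤ (2:ℝ) ^ (-k2) := by
    calc ∑ y, μY y ^ 2 ≤ ∑ y, (2:ℝ) ^ (-k2) * μY y := by
          refine Finset.sum_le_sum fun y _ => ?_
          rw [sq]
          exact mul_le_mul_of_nonneg_right (hk2 y) (hY.1 y)
      _ = (2:ℝ) ^ (-k2) := by rw [← Finset.mul_sum, hY.2, mul_one]
  -- combine
  have habs_nonneg : 0 ≤ ∑ x, μX x * ‖g x‖ :=
    Finset.sum_nonneg fun x _ => mul_nonneg (hX.1 x) (norm_nonneg _)
  have step1 : ‖∑ x, (μX x : ℂ) * g x‖ ^ 2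
      ≤ (∑ x, μX x * ‖g x‖) ^ 2 :=
    pow_le_pow_left₀ (norm_nonneg _) hA 2
  have hplpos : (0:ℝ) ≤ (p:ℝ) ^ l := pow_nonneg (Nat.cast_nonneg p) l
  have step2 : (∑ x, μX x * ‖g x‖) ^ 2
      ≤ (2:ℝ) ^ (-k1) * ((p:ℝ) ^ l * (2:ℝ) ^ (-k2)) := by
    refine hB.trans ?_
    rw [hX.2, one_mul]
    refine hC1.trans ?_
    rw [hD]
    refine mul_le_mul_of_nonneg_left ?_ (by positivity)
    exact mul_le_mul_of_nonneg_left hC2 hplpos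
  refine (step1.trans step2).trans (le_of_eq ?_)
  rw [neg_add, Real.rpow_add (by norm_num : (0:ℝ) < 2)]
  ring

end
end

section
/- Let p be a prime, l a natural number, and let X and Y be independent random variables taking values in F_p^l. For natural numbers c1, c2, let X_{c1} denote the distribution of (sum of 2^{c1} independent copies of X) minus (sum of another 2^{c1} independent copies of X), with all copies mutually independent, and define Y_{c2} analogously from Y (arithmetic in F_p^l). Then for every nontrivial character ψ of the additive group of F_p (ψ(s) = e^{2πi·rs/p} for some r ≠ 0), |E_{X,Y}[ψ(X·Y)]| ≤ |E_{X_{c1},Y_{c2}}[ψ(X_{c1}·Y_{c2})]|^{1/2^{c1+c2+2}}, where X_{c1} and Y_{c2} are taken independent. -/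
open Finset
open scoped Classical

noncomputable section

/-- The distribution of (sum of `t` independent copies of `μ`) minus
(sum of another `t` independent copies of `μ`), all copies mutually independent. -/
def sumDiffD {α : Type*} [Fintype α] [AddCommGroup α] (t : ℕ) (μ : α → ℝ) : α → ℝ :=
  pushD (fun fg : (Fin t → α) × (Fin t → α) => (∑ j, fg.1 j) - (∑ j, fg.2 j))
    (prodD (fun f => ∏ j, μ (f j)) (fun f => ∏ j, μ (f j)))


set_option linter.unusedSectionVars false

section Aux

variable {p : ℕ} [NeZero p]

lemma chr_zero (r : ZMod p) : chr p r 0 = 1 := by simp [chr]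

lemma chr_eq_pow (r s : ZMod p) :
    chr p r s = Complex.exp (2 * Real.pi * Complex.I / p) ^ (r * s).val := by
  unfold chr
  rw [show (2 * Real.pi * Complex.I * ((r * s).val : ℂ) / (p:ℂ))
      = ((r * s).val : ℕ) * (2 * Real.pi * Complex.I / (p:ℂ)) from by push_cast; ring,
    Complex.exp_nat_mul]

lemma zeta_pow_p : Complex.exp (2 * Real.pi * Complex.I / p) ^ p = 1 := by
  rw [← Complex.exp_nat_mul]
  have hp : (p : ℂ) ≠ 0 := Nat.cast_ne_zero.2 (NeZero.ne p)
  rw [show (p : ℂ) * (2 * Real.pi * Complex.I / p) = 2 * Real.pi * Complex.I by field_simp]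
  exact Complex.exp_two_pi_mul_I

lemma zeta_pow_mod (m : ℕ) :
    Complex.exp (2 * Real.pi * Complex.I / p) ^ (m % p) =
      Complex.exp (2 * Real.pi * Complex.I / p) ^ m := by
  conv_rhs => rw [← Nat.mod_add_div m p]
  rw [pow_add, pow_mul, zeta_pow_p, one_pow, mul_one]

lemma chr_add (r a b : ZMod p) : chr p r (a + b) = chr p r a * chr p r b := by
  rw [chr_eq_pow, chr_eq_pow, chr_eq_pow, ← pow_add, mul_add, ZMod.val_add, zeta_pow_mod]

lemma chr_abs (r s : ZMod p) : ‖chr p r s‖ = 1 := by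
  have h : chr p r s = Complex.exp ((2 * Real.pi * ((r*s).val : ℝ) / p : ℝ) * Complex.I) := by
    unfold chr; congr 1; push_cast; ring
  rw [h, Complex.norm_exp_ofReal_mul_I]

lemma chr_ne_zero (r s : ZMod p) : chr p r s ≠ 0 := Complex.exp_ne_zero _

lemma chr_neg (r a : ZMod p) : chr p r (-a) = starRingEnd ℂ (chr p r a) := by
  have h1 : chr p r (-a) * chr p r a = 1 := by
    rw [← chr_add]; simp [chr_zero]
  have h2 : starRingEnd ℂ (chr p r a) * chr p r a = 1 := by
    rw [mul_comm, Complex.mul_conj, ← Complex.sq_norm, chr_abs]; norm_num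
  exact mul_right_cancel₀ (chr_ne_zero r a) (h1.trans h2.symm)

lemma chr_sum {ι : Type*} (s : Finset ι) (t : ι → ZMod p) (r : ZMod p) :
    chr p r (∑ j ∈ s, t j) = ∏ j ∈ s, chr p r (t j) := by
  induction s using Finset.cons_induction with
  | empty => simp [chr_zero]
  | cons a s ha ih => rw [Finset.sum_cons, Finset.prod_cons, chr_add, ih]

variable {l : ℕ}

lemma ipZ_add (a b y : Fin l → ZMod p) : ipZ (a + b) y = ipZ a y + ipZ b y := by
  simp [ipZ, add_mul, Finset.sum_add_distrib]

lemma ipZ_neg (a y : Fin l → ZMod p) : ipZ (-a) y = - ipZ a y := by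
  simp [ipZ, Finset.sum_neg_distrib]

lemma ipZ_comm (a y : Fin l → ZMod p) : ipZ a y = ipZ y a := by
  simp [ipZ, mul_comm]

lemma ipZ_sum {ι : Type*} (s : Finset ι) (f : ι → (Fin l → ZMod p)) (y : Fin l → ZMod p) :
    ipZ (∑ j ∈ s, f j) y = ∑ j ∈ s, ipZ (f j) y := by
  induction s using Finset.cons_induction with
  | empty => simp [ipZ]
  | cons a s ha ih => rw [Finset.sum_cons, Finset.sum_cons, ipZ_add, ih]

lemma sum_pushD_mul {α β : Type*} [Fintype α] [Fintype β] (f : α → β) (pr : α → ℝ)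
    (φ : β → ℂ) :
    ∑ b, ((pushD f pr b : ℝ) : ℂ) * φ b = ∑ a, (pr a : ℂ) * φ (f a) := by
  unfold pushD
  have h1 : ∀ b, ((∑ a, if f a = b then pr a else 0 : ℝ) : ℂ)
      = ∑ a, if f a = b then (pr a : ℂ) else 0 := by
    intro b
    push_cast [apply_ite (Complex.ofReal)]
    rfl
  simp only [h1, Finset.sum_mul, ite_mul, zero_mul]
  rw [Finset.sum_comm]
  simp

/-- Fourier transform of `sumDiffD`. -/
lemma hA (t : ℕ) (μ : (Fin l → ZMod p) → ℝ) (r : ZMod p) (y : Fin l → ZMod p) :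
    ∑ x, ((sumDiffD t μ x : ℝ) : ℂ) * chr p r (ipZ x y)
      = ((‖∑ x, (μ x : ℂ) * chr p r (ipZ x y)‖ : ℝ) : ℂ) ^ (2 * t) := by
  unfold sumDiffD
  rw [sum_pushD_mul]
  have key : ∀ fg : (Fin t → (Fin l → ZMod p)) × (Fin t → (Fin l → ZMod p)),
      (prodD (fun f => ∏ j, μ (f j)) (fun f => ∏ j, μ (f j)) fg : ℂ)
        * chr p r (ipZ ((∑ j, fg.1 j) - (∑ j, fg.2 j)) y)
      = (∏ j, ((μ (fg.1 j) : ℂ) * chr p r (ipZ (fg.1 j) y)))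
        * ∏ j, ((μ (fg.2 j) : ℂ) * starRingEnd ℂ (chr p r (ipZ (fg.2 j) y))) := by
    intro fg
    rw [sub_eq_add_neg, ipZ_add, ipZ_neg, chr_add, ipZ_sum, ipZ_sum, chr_sum,
      show -∑ j, ipZ (fg.2 j) y = ∑ j, -(ipZ (fg.2 j) y) by rw [Finset.sum_neg_distrib],
      chr_sum]
    simp only [chr_neg, prodD]
    push_cast
    rw [Finset.prod_mul_distrib, Finset.prod_mul_distrib]
    ring
  rw [Finset.sum_congr rfl (fun fg _ => key fg), Fintype.sum_prod_type]
  simp only [Finset.sum_mul_sum]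
  rw [← Finset.sum_mul_sum]
  have h1 : ∑ f : Fin t → (Fin l → ZMod p), ∏ j, ((μ (f j) : ℂ) * chr p r (ipZ (f j) y))
      = (∑ x, (μ x : ℂ) * chr p r (ipZ x y)) ^ t := by
    rw [Fintype.sum_pow]
  have h2 : ∑ g : Fin t → (Fin l → ZMod p),
        ∏ j, ((μ (g j) : ℂ) * starRingEnd ℂ (chr p r (ipZ (g j) y)))
      = (starRingEnd ℂ (∑ x, (μ x : ℂ) * chr p r (ipZ x y))) ^ t :=
    calc ∑ g : Fin t → (Fin l → ZMod p),
          ∏ j, ((μ (g j) : ℂ) * starRingEnd ℂ (chr p r (ipZ (g j) y)))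
        = (∑ x, (μ x : ℂ) * starRingEnd ℂ (chr p r (ipZ x y))) ^ t :=
          (Fintype.sum_pow (fun x => (μ x : ℂ) * starRingEnd ℂ (chr p r (ipZ x y))) t).symm
      _ = (starRingEnd ℂ (∑ x, (μ x : ℂ) * chr p r (ipZ x y))) ^ t := by
          rw [map_sum]
          congr 1
          refine Finset.sum_congr rfl fun x _ => ?_
          rw [map_mul, Complex.conj_ofReal]
  rw [h1, h2, ← mul_pow, Complex.mul_conj, pow_mul']
  norm_cast
  rw [← Complex.sq_norm]
  push_cast
  rw [← pow_mul, ← pow_mul]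
  ring_nf

lemma sum_pushD {α β : Type*} [Fintype α] [Fintype β] (f : α → β) (pr : α → ℝ) :
    ∑ b, pushD f pr b = ∑ a, pr a := by
  unfold pushD
  rw [Finset.sum_comm]
  simp

lemma sumDiffD_isDist {α : Type*} [Fintype α] [AddCommGroup α] (t : ℕ) (μ : α → ℝ)
    (hμ : IsDist μ) : IsDist (sumDiffD t μ) := by
  constructor
  · intro a
    apply Finset.sum_nonneg
    intro fg _
    split
    · exact mul_nonneg (Finset.prod_nonneg fun j _ => hμ.1 _)
        (Finset.prod_nonneg fun j _ => hμ.1 _)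
    · exact le_refl 0
  · unfold sumDiffD
    rw [sum_pushD, Fintype.sum_prod_type]
    simp only [prodD]
    rw [← Finset.sum_mul_sum]
    rw [show ∑ f : Fin t → α, ∏ j, μ (f j) = (∑ x, μ x) ^ t from (Fintype.sum_pow μ t).symm]
    rw [hμ.2, one_pow, one_mul]

/-- weighted Cauchy-Schwarz -/
lemma wcs {α : Type*} [Fintype α] (w a : α → ℝ) (hw : ∀ i, 0 ≤ w i)
    (hw1 : ∑ i, w i = 1) :
    (∑ i, w i * a i) ^ 2 ≤ ∑ i, w i * a i ^ 2 := by
  have h := Finset.sum_mul_sq_le_sq_mul_sq Finset.univ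
    (fun i => Real.sqrt (w i)) (fun i => Real.sqrt (w i) * a i)
  have e1 : ∀ i : α, Real.sqrt (w i) * (Real.sqrt (w i) * a i) = w i * a i := by
    intro i; rw [← mul_assoc, Real.mul_self_sqrt (hw i)]
  have e2 : ∀ i : α, Real.sqrt (w i) ^ 2 = w i := fun i => Real.sq_sqrt (hw i)
  have e3 : ∀ i : α, (Real.sqrt (w i) * a i) ^ 2 = w i * a i ^ 2 := by
    intro i; rw [mul_pow, e2]
  simp only [e1, e2, e3] at h
  rwa [hw1, one_mul] at h

lemma iter_pow {α : Type*} [Fintype α] (w a : α → ℝ) (hw : ∀ i, 0 ≤ w i)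
    (hw1 : ∑ i, w i = 1) (A : ℝ) (hA0 : 0 ≤ A) (hA : A ≤ ∑ i, w i * a i) (k : ℕ) :
    A ^ (2 ^ k) ≤ ∑ i, w i * a i ^ (2 ^ k) := by
  induction k with
  | zero => simpa using hA
  | succ k ih =>
      calc A ^ (2 ^ (k+1)) = (A ^ (2 ^ k)) ^ 2 := by rw [← pow_mul, pow_succ]
        _ ≤ (∑ i, w i * a i ^ (2 ^ k)) ^ 2 := by
            apply pow_le_pow_left₀ (pow_nonneg hA0 _) ih
        _ ≤ ∑ i, w i * (a i ^ (2 ^ k)) ^ 2 := wcs w (fun i => a i ^ (2 ^ k)) hw hw1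
        _ = ∑ i, w i * a i ^ (2 ^ (k+1)) := by
            congr 1; ext i; rw [← pow_mul, pow_succ]

/-- The bilinear character sum. -/
def TT (p l : ℕ) [NeZero p] (r : ZMod p) (μ ν : (Fin l → ZMod p) → ℝ) : ℂ :=
  ∑ x, ∑ y, ((μ x * ν y : ℝ) : ℂ) * chr p r (ipZ x y)

lemma TT_eq (r : ZMod p) (μ ν : (Fin l → ZMod p) → ℝ) :
    TT p l r μ ν = ∑ y, (ν y : ℂ) * ∑ x, (μ x : ℂ) * chr p r (ipZ x y) := by
  unfold TT
  rw [Finset.sum_comm]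
  refine Finset.sum_congr rfl fun y _ => ?_
  rw [Finset.mul_sum]
  refine Finset.sum_congr rfl fun x _ => ?_
  push_cast
  ring

lemma TT_comm (r : ZMod p) (μ ν : (Fin l → ZMod p) → ℝ) :
    TT p l r μ ν = TT p l r ν μ := by
  unfold TT
  rw [Finset.sum_comm]
  refine Finset.sum_congr rfl fun y _ => Finset.sum_congr rfl fun x _ => ?_
  rw [ipZ_comm, mul_comm (μ x)]

lemma main_step (r : ZMod p) (μ ν : (Fin l → ZMod p) → ℝ) (hν : IsDist ν) (c : ℕ) :
    ‖TT p l r μ ν‖ ^ (2 ^ (c+1)) ≤ ‖TT p l r (sumDiffD (2 ^ c) μ) ν‖ := by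
  let a : (Fin l → ZMod p) → ℝ :=
    fun y => ‖∑ x, (μ x : ℂ) * chr p r (ipZ x y)‖
  have key : TT p l r (sumDiffD (2 ^ c) μ) ν
      = ((∑ y, ν y * a y ^ (2 ^ (c+1)) : ℝ) : ℂ) := by
    rw [TT_eq]
    push_cast
    refine Finset.sum_congr rfl fun y _ => ?_
    rw [hA (2 ^ c) μ r y]
    norm_cast
    rw [show (2:ℕ) ^ (c+1) = 2 * 2 ^ c from pow_succ' 2 c]
  have habs : ‖TT p l r μ ν‖ ≤ ∑ y, ν y * a y := by
    rw [TT_eq]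
    refine le_trans (norm_sum_le _ _) (Finset.sum_le_sum fun y _ => ?_)
    rw [norm_mul, Complex.norm_real, Real.norm_eq_abs, abs_of_nonneg (hν.1 y)]
  have hiter := iter_pow ν a hν.1 hν.2 (‖TT p l r μ ν‖)
    (norm_nonneg _) habs (c+1)
  rw [key, Complex.norm_real, Real.norm_eq_abs, abs_of_nonneg]
  · exact hiter
  · exact Finset.sum_nonneg fun y _ => mul_nonneg (hν.1 y)
      (pow_nonneg (norm_nonneg _) _)

end Aux

theorem stmt_3
    (p l : ℕ) [NeZero p] (hp : p.Prime) (c1 c2 : ℕ)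
    (μX μY : (Fin l → ZMod p) → ℝ)
    (hX : IsDist μX) (hY : IsDist μY)
    (r : ZMod p) (hr : r ≠ 0) :
    ‖∑ x, ∑ y, ((μX x * μY y : ℝ) : ℂ) * chr p r (ipZ x y)‖
      ≤ (‖∑ x, ∑ y,
            ((sumDiffD (2 ^ c1) μX x * sumDiffD (2 ^ c2) μY y : ℝ) : ℂ) * chr p r (ipZ x y)‖)
          ^ ((1:ℝ) / 2 ^ (c1 + c2 + 2)) := by
  have hX' := sumDiffD_isDist (2 ^ c1) μX hX
  have hY' := sumDiffD_isDist (2 ^ c2) μY hY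
  set A := ‖TT p l r μX μY‖ with hAdef
  have s1 : A ^ (2 ^ (c1+1)) ≤ ‖TT p l r (sumDiffD (2 ^ c1) μX) μY‖ :=
    main_step r μX μY hY c1
  have s2 : ‖TT p l r (sumDiffD (2 ^ c1) μX) μY‖ ^ (2 ^ (c2+1))
      ≤ ‖TT p l r (sumDiffD (2 ^ c1) μX) (sumDiffD (2 ^ c2) μY)‖ := by
    rw [TT_comm r (sumDiffD (2 ^ c1) μX) μY,
      TT_comm r (sumDiffD (2 ^ c1) μX) (sumDiffD (2 ^ c2) μY)]
    exact main_step r μY (sumDiffD (2 ^ c1) μX) hX' c2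
  have s3 : A ^ (2 ^ (c1 + c2 + 2))
      ≤ ‖TT p l r (sumDiffD (2 ^ c1) μX) (sumDiffD (2 ^ c2) μY)‖ := by
    calc A ^ (2 ^ (c1 + c2 + 2)) = (A ^ (2 ^ (c1+1))) ^ (2 ^ (c2+1)) := by
          rw [← pow_mul, ← pow_add]; ring_nf
      _ ≤ (‖TT p l r (sumDiffD (2 ^ c1) μX) μY‖) ^ (2 ^ (c2+1)) :=
          pow_le_pow_left₀ (pow_nonneg (norm_nonneg _) _) s1 _
      _ ≤ _ := s2
  show A ≤ (‖TT p l r (sumDiffD (2 ^ c1) μX) (sumDiffD (2 ^ c2) μY)‖)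
      ^ ((1:ℝ) / 2 ^ (c1 + c2 + 2))
  set B := ‖TT p l r (sumDiffD (2 ^ c1) μX) (sumDiffD (2 ^ c2) μY)‖ with hBdef
  have hA0 : 0 ≤ A := norm_nonneg _
  have hB0 : 0 ≤ B := norm_nonneg _
  set N : ℕ := 2 ^ (c1 + c2 + 2) with hN
  have hNpos : (0:ℝ) < (N:ℝ) := by positivity
  have hexp : (1:ℝ) / 2 ^ (c1 + c2 + 2) = 1 / (N:ℝ) := by push_cast [hN]; norm_num
  rw [hexp]
  have h1 : A = (A ^ N) ^ ((1:ℝ) / (N:ℝ)) := by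
    rw [← Real.rpow_natCast A N, ← Real.rpow_mul hA0]
    rw [mul_one_div, div_self (ne_of_gt hNpos), Real.rpow_one]
  rw [h1]
  exact Real.rpow_le_rpow (pow_nonneg hA0 _) s3 (by positivity)


end
end

section
/- Let X be a probability distribution on {0,1}^{n1}, Y a probability distribution on {0,1}^{n2}, and f : {0,1}^{n1} → {0,1}^{n2} a function such that every element of the support of Y lies in the image of f. If the statistical distance between the pushforward f(X) and Y is at most ε for some 0 < ε < 1, then there exists a probability distribution X' on {0,1}^{n1} such that the statistical distance between X' and X is at most ε and Y = f(X'). -/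
open Finset
open scoped Classical

noncomputable section

theorem stmt_6
    (n1 n2 : ℕ)
    (μX : BS n1 → ℝ) (hX : IsDist μX)
    (μY : BS n2 → ℝ) (hY : IsDist μY)
    (f : BS n1 → BS n2)
    (hsupp : ∀ b, μY b ≠ 0 → ∃ a, f a = b)
    (ε : ℝ) (hε0 : 0 < ε) (hε1 : ε < 1)
    (hsd : SD (pushD f μX) μY ≤ ε) :
    ∃ μX' : BS n1 → ℝ, IsDist μX' ∧ SD μX' μX ≤ ε ∧ μY = pushD f μX' := by
  classical
  set P : BS n2 → ℝ := pushD f μX with hP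
  have hPnn : ∀ b, 0 ≤ P b := by
    intro b
    apply Finset.sum_nonneg
    intro a _
    split <;> simp [hX.1 a]
  have hPzero : ∀ b, P b = 0 → ∀ a, f a = b → μX a = 0 := by
    intro b hb a ha
    by_contra hne
    have hpos : 0 < μX a := lt_of_le_of_ne (hX.1 a) (Ne.symm hne)
    have hgt : 0 < P b := by
      rw [hP]
      unfold pushD
      refine Finset.sum_pos' (fun i _ => by split <;> simp [hX.1 i]) ⟨a, Finset.mem_univ a, ?_⟩
      simp [ha, hpos]
    linarith
  -- choose a preimage for each b in the support of μY
  set g : BS n2 → BS n1 := fun b => if h : ∃ a, f a = b then h.choose else (fun _ => false)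
    with hg
  have hgspec : ∀ b, μY b ≠ 0 → f (g b) = b := by
    intro b hb
    have h : ∃ a, f a = b := hsupp b hb
    simp only [hg, dif_pos h]
    exact h.choose_spec
  set μX' : BS n1 → ℝ := fun a =>
    if P (f a) = 0 then (if g (f a) = a then μY (f a) else 0)
    else μX a * μY (f a) / P (f a) with hμX'
  have hnn : ∀ a, 0 ≤ μX' a := by
    intro a
    simp only [hμX']
    split
    · split
      · exact hY.1 _
      · exact le_refl 0
    · exact div_nonneg (mul_nonneg (hX.1 _) (hY.1 _)) (hPnn _)
  -- per-fiber sums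
  have hfiber_sum : ∀ b, ∑ a ∈ Finset.univ.filter (fun a => f a = b), μX' a = μY b := by
    intro b
    by_cases hb : P b = 0
    · have : ∀ a ∈ Finset.univ.filter (fun a => f a = b), μX' a =
        if g b = a then μY b else 0 := by
        intro a ha
        have hfa : f a = b := (Finset.mem_filter.mp ha).2
        simp [hμX', hfa, hb]
      rw [Finset.sum_congr rfl this, Finset.sum_ite_eq]
      by_cases hY0 : μY b = 0
      · simp [hY0]
      · have : g b ∈ Finset.univ.filter (fun a => f a = b) := by
          simp [hgspec b hY0]
        simp [this]
    · have : ∀ a ∈ Finset.univ.filter (fun a => f a = b), μX' a =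
        μX a * (μY b / P b) := by
        intro a ha
        have hfa : f a = b := (Finset.mem_filter.mp ha).2
        simp [hμX', hfa, hb, mul_div_assoc]
      rw [Finset.sum_congr rfl this, ← Finset.sum_mul]
      have hPb : ∑ a ∈ Finset.univ.filter (fun a => f a = b), μX a = P b := by
        rw [Finset.sum_filter, hP]
        unfold pushD
        congr!
      rw [hPb]
      field_simp
  have hfiber_abs : ∀ b, ∑ a ∈ Finset.univ.filter (fun a => f a = b), |μX' a - μX a|
      = |μY b - P b| := by
    intro b
    by_cases hb : P b = 0
    · have : ∀ a ∈ Finset.univ.filter (fun a => f a = b), |μX' a - μX a| = μX' a := by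
        intro a ha
        have hfa : f a = b := (Finset.mem_filter.mp ha).2
        rw [hPzero b hb a hfa, sub_zero, abs_of_nonneg (hnn a)]
      rw [Finset.sum_congr rfl this, hfiber_sum b, hb, sub_zero,
        abs_of_nonneg (hY.1 b)]
    · have : ∀ a ∈ Finset.univ.filter (fun a => f a = b), |μX' a - μX a| =
        μX a * (|μY b - P b| / P b) := by
        intro a ha
        have hfa : f a = b := (Finset.mem_filter.mp ha).2
        have hPpos : 0 < P b := lt_of_le_of_ne (hPnn b) (Ne.symm hb)
        have : μX' a - μX a = μX a * ((μY b - P b) / P b) := by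
          simp only [hμX', hfa, if_neg hb]
          field_simp
        rw [this, abs_mul, abs_of_nonneg (hX.1 a), abs_div, abs_of_pos hPpos]
      rw [Finset.sum_congr rfl this, ← Finset.sum_mul]
      have hPb : ∑ a ∈ Finset.univ.filter (fun a => f a = b), μX a = P b := by
        rw [Finset.sum_filter, hP]
        unfold pushD
        congr!
      rw [hPb]
      field_simp
  refine ⟨μX', ⟨hnn, ?_⟩, ?_, ?_⟩
  · rw [← Finset.sum_fiberwise Finset.univ f μX']
    rw [Finset.sum_congr rfl (fun b _ => hfiber_sum b)]
    exact hY.2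
  · have : SD μX' μX = SD P μY := by
      simp only [SD]
      congr 1
      rw [← Finset.sum_fiberwise Finset.univ f (fun a => |μX' a - μX a|)]
      rw [Finset.sum_congr rfl (fun b _ => hfiber_abs b)]
      apply Finset.sum_congr rfl
      intro b _
      rw [abs_sub_comm]
    rw [this]
    exact hsd
  · funext b
    rw [← hfiber_sum b, Finset.sum_filter]
    unfold pushD
    congr!

end
end

section
/- Let n, l, m, k, D be natural numbers with D ≥ 2, let b > 2 and δ > 0 be reals, and ε, ε' ∈ (0,1). Suppose Cond : {0,1}^n → ({0,1}^l)^D is a function such that for every (n,δn)-source Y, the distribution Cond(Y) is ε'-close to a convex combination of distributions on ({0,1}^l)^D in each of which at least one of the D coordinates has min-entropy at least (b/(b+1))l. Let t = ⌈log₂ D⌉ and suppose nmExt : {0,1}^n × {0,1}^{l+t} → {0,1}^m is a (D−1,k,ε)-non-malleable extractor. Define TExt : {0,1}^n × {0,1}^n → {0,1}^m by TExt(x,y) = ⊕_{j=1}^{D} nmExt(x, Cond(y)_j ∘ bin(j−1)), where bin(j−1) is the t-bit binary representation of j−1, ∘ denotes concatenation, and ⊕ is bitwise XOR. Then for every (n,δn)-source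 Y and every (n,k)-source X independent of Y, the distribution TExt(X,Y) is (ε' + 2^{l+t−(b/(b+1))l}·ε)-close to U_m. -/
open Finset
open scoped Classical

noncomputable section

/-- XOR of a finite family of bits. -/
def bXor {D : ℕ} (g : Fin D → Bool) : Bool :=
  decide ((∑ j, (if g j then (1 : ZMod 2) else 0)) = 1)

/-- The `t`-bit binary representation of `j`. -/
def binRep (D t : ℕ) (j : Fin D) : BS t := fun i => Nat.testBit (j : ℕ) (i : ℕ)

variable {α β γ : Type*} [Fintype α] [Fintype β] [Fintype γ]

lemma SD_nonneg (p q : α → ℝ) : 0 ≤ SD p q := by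
  unfold SD; positivity

lemma SD_triangle (p q r : α → ℝ) : SD p r ≤ SD p q + SD q r := by
  unfold SD
  rw [← add_div]
  gcongr
  rw [← Finset.sum_add_distrib]
  exact Finset.sum_le_sum fun a _ => abs_sub_le _ _ _

lemma SD_dataproc (f : α → β) (p q : α → ℝ) : SD (pushD f p) (pushD f q) ≤ SD p q := by
  unfold SD pushD
  gcongr
  calc ∑ b, |(∑ a, if f a = b then p a else 0) - ∑ a, if f a = b then q a else 0|
      = ∑ b, |∑ a, if f a = b then p a - q a else 0| := by
        apply Finset.sum_congr rfl; intro b _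
        rw [← Finset.sum_sub_distrib]
        congr 1; apply Finset.sum_congr rfl; intro a _; split <;> simp
    _ ≤ ∑ b, ∑ a, |if f a = b then p a - q a else 0| := by
        exact Finset.sum_le_sum fun b _ => Finset.abs_sum_le_sum_abs _ _
    _ = ∑ a, ∑ b, if f a = b then |p a - q a| else 0 := by
        rw [Finset.sum_comm]
        apply Finset.sum_congr rfl; intro a _; apply Finset.sum_congr rfl; intro b _
        split <;> simp
    _ = ∑ a, |p a - q a| := by
        apply Finset.sum_congr rfl; intro a _
        simp [Finset.sum_ite_eq]

lemma pushD_sum (f : α → β) (p : α → ℝ) : ∑ b, pushD f p b = ∑ a, p a := by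
  unfold pushD
  rw [Finset.sum_comm]
  apply Finset.sum_congr rfl; intro a _
  simp [Finset.sum_ite_eq]

lemma pushD_nonneg (f : α → β) (p : α → ℝ) (hp : ∀ a, 0 ≤ p a) : ∀ b, 0 ≤ pushD f p b := by
  intro b; unfold pushD; apply Finset.sum_nonneg; intro a _
  split
  · exact hp a
  · exact le_refl 0

set_option linter.unusedSectionVars false

lemma pushD_comp (f : α → β) (g : β → γ) (p : α → ℝ) :
    pushD g (pushD f p) = pushD (fun a => g (f a)) p := by
  funext c
  unfold pushD
  calc ∑ b, (if g b = c then (∑ a, if f a = b then p a else 0) else 0)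
      = ∑ b, ∑ a, (if f a = b then (if g b = c then p a else 0) else 0) := by
        apply Finset.sum_congr rfl; intro b _
        split
        · apply Finset.sum_congr rfl; intro a _; split <;> simp_all
        · rw [Finset.sum_eq_zero]; intro a _; split <;> simp_all
    _ = ∑ a, ∑ b, (if f a = b then (if g b = c then p a else 0) else 0) := Finset.sum_comm
    _ = ∑ a, if g (f a) = c then p a else 0 := by
        apply Finset.sum_congr rfl; intro a _
        simp [Finset.sum_ite_eq]

lemma prodD_push (p : α → ℝ) (g : β → γ) (q : β → ℝ) :
    prodD p (pushD g q) = pushD (Prod.map id g) (prodD p q) := by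
  funext z
  obtain ⟨x, v⟩ := z
  unfold prodD pushD
  rw [Fintype.sum_prod_type]
  simp only [Prod.map, Prod.mk.injEq, id_eq]
  calc p x * ∑ y, (if g y = v then q y else 0)
      = ∑ y, (if g y = v then p x * q y else 0) := by
        rw [Finset.mul_sum]; apply Finset.sum_congr rfl; intro y _; split <;> simp
    _ = ∑ x', ∑ y, if x' = x ∧ g y = v then p x' * q y else 0 := by
        rw [Finset.sum_comm]
        apply Finset.sum_congr rfl; intro y _
        by_cases h : g y = v <;> simp [h, Finset.sum_ite_eq']
    _ = _ := by
        apply Finset.sum_congr rfl; intro x' _; apply Finset.sum_congr rfl; intro y _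
        congr 1

lemma prodD_sum (p : α → ℝ) (q : β → ℝ) : ∑ z : α × β, prodD p q z = (∑ a, p a) * (∑ b, q b) := by
  unfold prodD
  rw [Fintype.sum_prod_type, Finset.sum_mul]
  apply Finset.sum_congr rfl; intro a _
  rw [Finset.mul_sum]

lemma SD_prodD_left (p : α → ℝ) (hp : IsDist p) (q q' : β → ℝ) :
    SD (prodD p q) (prodD p q') = SD q q' := by
  unfold SD prodD
  congr 1
  rw [Fintype.sum_prod_type]
  calc ∑ a, ∑ b, |p a * q b - p a * q' b|
      = ∑ a, p a * ∑ b, |q b - q' b| := by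
        apply Finset.sum_congr rfl; intro a _
        rw [Finset.mul_sum]
        apply Finset.sum_congr rfl; intro b _
        rw [← mul_sub, abs_mul, abs_of_nonneg (hp.1 a)]
    _ = (∑ a, p a) * ∑ b, |q b - q' b| := by rw [Finset.sum_mul]
    _ = ∑ b, |q b - q' b| := by rw [hp.2, one_mul]

lemma SD_convex {ι : Type*} [Fintype ι] (w : ι → ℝ) (hw0 : ∀ i, 0 ≤ w i) (hw1 : ∑ i, w i = 1)
    (P : ι → α → ℝ) (U : α → ℝ) :
    SD (fun z => ∑ i, w i * P i z) U ≤ ∑ i, w i * SD (P i) U := by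
  unfold SD
  have key : ∑ a, |(∑ i, w i * P i a) - U a| ≤ ∑ i, w i * ∑ a, |P i a - U a| := by
    calc ∑ a, |(∑ i, w i * P i a) - U a|
        = ∑ a, |∑ i, w i * (P i a - U a)| := by
          apply Finset.sum_congr rfl; intro a _
          congr 1
          simp [mul_sub, Finset.sum_sub_distrib, ← Finset.sum_mul, hw1]
      _ ≤ ∑ a, ∑ i, |w i * (P i a - U a)| :=
          Finset.sum_le_sum fun a _ => Finset.abs_sum_le_sum_abs _ _
      _ = ∑ i, ∑ a, |w i * (P i a - U a)| := Finset.sum_comm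
      _ = ∑ i, w i * ∑ a, |P i a - U a| := by
          apply Finset.sum_congr rfl; intro i _
          rw [Finset.mul_sum]
          apply Finset.sum_congr rfl; intro a _
          rw [abs_mul, abs_of_nonneg (hw0 i)]
  have h2 : ∑ i, w i * ((∑ a, |P i a - U a|) / 2) = (∑ i, w i * ∑ a, |P i a - U a|) / 2 := by
    rw [Finset.sum_div]
    apply Finset.sum_congr rfl; intro i _
    rw [mul_div_assoc]
  rw [h2]
  exact div_le_div_of_nonneg_right key (by norm_num) |>.trans_eq rfl

lemma pushD_linear {ι : Type*} [Fintype ι] (f : α → β) (w : ι → ℝ) (p : ι → α → ℝ) :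
    pushD f (fun a => ∑ i, w i * p i a) = fun b => ∑ i, w i * pushD f (p i) b := by
  funext b
  unfold pushD
  calc ∑ a, (if f a = b then ∑ i, w i * p i a else 0)
      = ∑ a, ∑ i, (if f a = b then w i * p i a else 0) := by
        apply Finset.sum_congr rfl; intro a _; split <;> simp
    _ = ∑ i, ∑ a, (if f a = b then w i * p i a else 0) := Finset.sum_comm
    _ = ∑ i, w i * ∑ a, (if f a = b then p i a else 0) := by
        apply Finset.sum_congr rfl; intro i _
        rw [Finset.mul_sum]
        apply Finset.sum_congr rfl; intro a _
        split <;> simp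

/-- XOR with an independent uniform string is uniform. -/
lemma xor_uniform {m : ℕ} (g : β → BS m) (q : β → ℝ) (hq : ∑ b, q b = 1) :
    pushD (fun z : BS m × β => fun i => xor (z.1 i) (g z.2 i))
      (prodD (uniformD (BS m)) q) = uniformD (BS m) := by
  funext c
  unfold pushD prodD uniformD
  rw [Fintype.sum_prod_type]
  simp only []
  have hsolve : ∀ (a : BS m) (r : β), ((fun i => xor (a i) (g r i)) = c) ↔ a = fun i => xor (c i) (g r i) := by
    intro a r
    constructor
    · intro h; funext i
      have := congrFun h i
      revert this; cases a i <;> cases g r i <;> cases c i <;> decide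
    · intro h; funext i
      rw [congrFun h i]
      cases c i <;> cases g r i <;> decide
  calc ∑ a : BS m, ∑ r, (if (fun i => xor ((a,r).1 i) (g (a,r).2 i)) = c then (Fintype.card (BS m) : ℝ)⁻¹ * q (a,r).2 else 0)
      = ∑ r, ∑ a : BS m, (if a = (fun i => xor (c i) (g r i)) then (Fintype.card (BS m) : ℝ)⁻¹ * q r else 0) := by
        rw [Finset.sum_comm]
        apply Finset.sum_congr rfl; intro r _; apply Finset.sum_congr rfl; intro a _
        rw [if_congr (hsolve a r) rfl rfl]
    _ = ∑ r, (Fintype.card (BS m) : ℝ)⁻¹ * q r := by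
        apply Finset.sum_congr rfl; intro r _
        simp [Finset.sum_ite_eq']
    _ = (Fintype.card (BS m) : ℝ)⁻¹ := by rw [← Finset.mul_sum, hq, mul_one]

/-- Conditioning on the (visible) seed: SD of the NME joint distributions decomposes
as a `p`-weighted sum of per-seed SDs. -/
lemma SD_cond {X S M : Type*} [Fintype X] [Fintype S] [Fintype M] (r : ℕ)
    (E : X → S → M) (A : Fin r → S → S) (μ : X → ℝ) (p : S → ℝ) (hp : ∀ y, 0 ≤ p y) :
    SD (pushD (fun xy : X × S => (E xy.1 xy.2, fun i => E xy.1 (A i xy.2), xy.2)) (prodD μ p))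
       (prodD (uniformD M) (pushD (fun xy : X × S => ((fun i => E xy.1 (A i xy.2)), xy.2)) (prodD μ p)))
    = ∑ y, p y * SD (pushD (fun x => (E x y, fun i => E x (A i y))) μ)
                    (prodD (uniformD M) (pushD (fun x => fun i => E x (A i y)) μ)) := by
  have hL : ∀ (o₁ : M) (o₂ : Fin r → M) (y : S),
      pushD (fun xy : X × S => (E xy.1 xy.2, fun i => E xy.1 (A i xy.2), xy.2)) (prodD μ p) (o₁, o₂, y)
      = p y * pushD (fun x => (E x y, fun i => E x (A i y))) μ (o₁, o₂) := by
    intro o₁ o₂ y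
    unfold pushD prodD
    rw [Fintype.sum_prod_type, Finset.sum_comm]
    rw [Finset.sum_eq_single y]
    · rw [Finset.mul_sum]
      apply Finset.sum_congr rfl; intro x _
      simp only [Prod.mk.injEq]
      by_cases h1 : E x y = o₁ <;> by_cases h2 : (fun i => E x (A i y)) = o₂ <;>
        simp [h1, h2, mul_comm]
    · intro y' _ hy'
      apply Finset.sum_eq_zero; intro x _
      simp [Prod.mk.injEq, hy']
    · intro h; exact absurd (Finset.mem_univ y) h
  have hR : ∀ (o₁ : M) (o₂ : Fin r → M) (y : S),
      prodD (uniformD M) (pushD (fun xy : X × S => ((fun i => E xy.1 (A i xy.2)), xy.2)) (prodD μ p)) (o₁, o₂, y)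
      = p y * prodD (uniformD M) (pushD (fun x => fun i => E x (A i y)) μ) (o₁, o₂) := by
    intro o₁ o₂ y
    unfold pushD prodD
    simp only []
    rw [Fintype.sum_prod_type, Finset.sum_comm]
    rw [Finset.sum_eq_single y]
    · rw [Finset.mul_sum, Finset.mul_sum]
      rw [Finset.mul_sum]
      apply Finset.sum_congr rfl; intro x _
      simp only [Prod.mk.injEq]
      by_cases h2 : (fun i => E x (A i y)) = o₂ <;> simp [h2] <;> ring
    · intro y' _ hy'
      apply Finset.sum_eq_zero; intro x _
      simp [Prod.mk.injEq, hy']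
    · intro h; exact absurd (Finset.mem_univ y) h
  unfold SD
  rw [Fintype.sum_prod_type]
  have step : ∀ o₁ : M, ∑ z : (Fin r → M) × S,
        |pushD (fun xy : X × S => (E xy.1 xy.2, fun i => E xy.1 (A i xy.2), xy.2)) (prodD μ p) (o₁, z.1, z.2)
         - prodD (uniformD M) (pushD (fun xy : X × S => ((fun i => E xy.1 (A i xy.2)), xy.2)) (prodD μ p)) (o₁, z.1, z.2)|
      = ∑ z : (Fin r → M) × S, p z.2 *
          |pushD (fun x => (E x z.2, fun i => E x (A i z.2))) μ (o₁, z.1)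
           - prodD (uniformD M) (pushD (fun x => fun i => E x (A i z.2)) μ) (o₁, z.1)| := by
    intro o₁
    apply Finset.sum_congr rfl; intro z _
    rw [hL o₁ z.1 z.2, hR o₁ z.1 z.2, ← mul_sub, abs_mul, abs_of_nonneg (hp z.2)]
  calc (∑ o₁ : M, ∑ z : (Fin r → M) × S,
          |pushD (fun xy : X × S => (E xy.1 xy.2, fun i => E xy.1 (A i xy.2), xy.2)) (prodD μ p) (o₁, z.1, z.2)
           - prodD (uniformD M) (pushD (fun xy : X × S => ((fun i => E xy.1 (A i xy.2)), xy.2)) (prodD μ p)) (o₁, z.1, z.2)|) / 2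
      = (∑ o₁ : M, ∑ z : (Fin r → M) × S, p z.2 *
          |pushD (fun x => (E x z.2, fun i => E x (A i z.2))) μ (o₁, z.1)
           - prodD (uniformD M) (pushD (fun x => fun i => E x (A i z.2)) μ) (o₁, z.1)|) / 2 := by
        congr 1; exact Finset.sum_congr rfl fun o₁ _ => step o₁
    _ = ∑ y, p y * ((∑ z : M × (Fin r → M),
          |pushD (fun x => (E x y, fun i => E x (A i y))) μ z
           - prodD (uniformD M) (pushD (fun x => fun i => E x (A i y)) μ) z|) / 2) := by
        have hy : ∀ y : S, p y * ((∑ z : M × (Fin r → M),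
            |pushD (fun x => (E x y, fun i => E x (A i y))) μ z
             - prodD (uniformD M) (pushD (fun x => fun i => E x (A i y)) μ) z|) / 2)
          = (∑ z : M × (Fin r → M), p y *
            |pushD (fun x => (E x y, fun i => E x (A i y))) μ z
             - prodD (uniformD M) (pushD (fun x => fun i => E x (A i y)) μ) z|) / 2 := by
          intro y; rw [← mul_div_assoc, Finset.mul_sum]
        simp only [hy]
        rw [← Finset.sum_div]
        congr 1
        simp only [Fintype.sum_prod_type]
        exact (Finset.sum_congr rfl fun o₁ _ => Finset.sum_comm).trans Finset.sum_comm
    _ = ∑ y, p y * SD (pushD (fun x => (E x y, fun i => E x (A i y))) μ)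
                    (prodD (uniformD M) (pushD (fun x => fun i => E x (A i y)) μ)) := rfl

lemma binRep_inj (D t : ℕ) (hDt : D ≤ 2^t) : Function.Injective (binRep D t) := by
  intro j j' h
  apply Fin.ext
  apply Nat.eq_of_testBit_eq
  intro i
  by_cases hi : i < t
  · exact congrFun h ⟨i, hi⟩
  · have h1 : (j:ℕ) < 2^i := lt_of_lt_of_le (lt_of_lt_of_le j.2 hDt)
      (Nat.pow_le_pow_right (by norm_num) (le_of_not_gt hi))
    have h2 : (j':ℕ) < 2^i := lt_of_lt_of_le (lt_of_lt_of_le j'.2 hDt)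
      (Nat.pow_le_pow_right (by norm_num) (le_of_not_gt hi))
    rw [Nat.testBit_lt_two_pow h1, Nat.testBit_lt_two_pow h2]

section split
variable {D : ℕ} (jstar : Fin D)

lemma erase_card (jstar : Fin D) : (Finset.univ.erase jstar).card = D - 1 := by
  rw [Finset.card_erase_of_mem (Finset.mem_univ _), Finset.card_univ, Fintype.card_fin]

def jOf (jstar : Fin D) : Fin (D - 1) → Fin D :=
  fun i => ((Finset.univ.erase jstar).equivFin.symm (Fin.cast (erase_card jstar).symm i) : _)

lemma jOf_ne (jstar : Fin D) (i : Fin (D-1)) : jOf jstar i ≠ jstar := by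
  have := ((Finset.univ.erase jstar).equivFin.symm (Fin.cast (erase_card jstar).symm i)).2
  exact (Finset.mem_erase.mp this).1

lemma sum_split {β : Type*} [AddCommMonoid β] (jstar : Fin D) (F : Fin D → β) :
    ∑ j, F j = F jstar + ∑ i : Fin (D-1), F (jOf jstar i) := by
  rw [← Finset.add_sum_erase _ F (Finset.mem_univ jstar)]
  congr 1
  rw [← Finset.sum_coe_sort (Finset.univ.erase jstar) F]
  rw [← Equiv.sum_comp ((Finset.univ.erase jstar).equivFin.symm.trans
    (Equiv.refl _)) (fun x => F (x : Fin D))]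
  rw [← Equiv.sum_comp (finCongr (erase_card jstar).symm)
    (fun i => F (((Finset.univ.erase jstar).equivFin.symm.trans (Equiv.refl _)) i : Fin D))]
  rfl

lemma bXor_split (jstar : Fin D) (g : Fin D → Bool) :
    bXor g = xor (g jstar) (bXor (fun i => g (jOf jstar i))) := by
  unfold bXor
  rw [sum_split jstar (fun j => if g j then (1 : ZMod 2) else 0)]
  have key : ∀ (c : Bool) (y : ZMod 2),
      decide ((if c then (1:ZMod 2) else 0) + y = 1) = xor c (decide (y = 1)) := by decide
  exact key (g jstar) _

end split

def iotaF (l t D : ℕ) (jstar : Fin D) : BS l → BS (l + t) :=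
  fun a => Fin.append a (binRep D t jstar)

def advF (l t D : ℕ) (jstar : Fin D) (f : BS l → Fin D → BS l) (i : Fin (D-1))
    (y : BS (l + t)) : BS (l + t) :=
  if (fun idx : Fin t => y (Fin.natAdd l idx)) = binRep D t jstar
  then Fin.append (f (fun idx : Fin l => y (Fin.castAdd t idx)) (jOf jstar i)) (binRep D t (jOf jstar i))
  else Fin.append (fun idx : Fin l => y (Fin.castAdd t idx)) (binRep D t jstar)

lemma append_last (l t : ℕ) (a : BS l) (c : BS t) :
    (fun idx : Fin t => (Fin.append a c) (Fin.natAdd l idx)) = c := by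
  funext idx; rw [Fin.append_right]

lemma append_first (l t : ℕ) (a : BS l) (c : BS t) :
    (fun idx : Fin l => (Fin.append a c) (Fin.castAdd t idx)) = a := by
  funext idx; rw [Fin.append_left]

lemma iotaF_inj (l t D : ℕ) (jstar : Fin D) : Function.Injective (iotaF l t D jstar) := by
  intro a a' hEq
  funext idx
  have := congrFun hEq (Fin.castAdd t idx)
  simp only [iotaF, Fin.append_left] at this
  exact this

lemma advF_ne (l t D : ℕ) (hDt : D ≤ 2^t) (jstar : Fin D) (f : BS l → Fin D → BS l) :
    ∀ i y, advF l t D jstar f i y ≠ y := by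
  intro i y hEq
  by_cases hc : (fun idx : Fin t => y (Fin.natAdd l idx)) = binRep D t jstar
  · rw [advF, if_pos hc] at hEq
    have := congrArg (fun (z : BS (l+t)) => (fun idx : Fin t => z (Fin.natAdd l idx))) hEq
    simp only [append_last] at this
    rw [hc] at this
    exact jOf_ne jstar i (binRep_inj D t hDt this)
  · rw [advF, if_neg hc] at hEq
    have := congrArg (fun (z : BS (l+t)) => (fun idx : Fin t => z (Fin.natAdd l idx))) hEq
    simp only [append_last] at this
    exact hc this.symm

lemma card_BS_real (s : ℕ) : (Fintype.card (BS s) : ℝ) = (2:ℝ) ^ ((s : ℕ) : ℝ) := by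
  have hc2 : Fintype.card (BS s) = 2 ^ s := by simp [Fintype.card_fun]
  rw [hc2]
  push_cast
  rw [← Real.rpow_natCast 2 s]

set_option maxHeartbeats 2000000 in
lemma perF (n l t m D : ℕ) (hDt : D ≤ 2 ^ t) (k ε : ℝ) (hε : 0 ≤ ε)
    (nmExt : BS n → BS (l + t) → BS m)
    (hnm : IsNMEr (D-1) nmExt k ε)
    (μX : BS n → ℝ) (hX : IsDist μX) (hXk : mEntGe μX k)
    (h : ℝ) (Q : BS l → ℝ) (hQ : IsDist Q) (hQh : mEntGe Q h)
    (jstar : Fin D) (f : BS l → (Fin D → BS l)) (hf : ∀ a, f a jstar = a) :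
    SD (pushD (fun xa : BS n × BS l => fun i : Fin m =>
         bXor (fun j : Fin D => nmExt xa.1 (Fin.append (f xa.2 j) (binRep D t j)) i))
       (prodD μX Q)) (uniformD (BS m))
    ≤ (2:ℝ) ^ ((l:ℝ) + (t : ℝ) - h) * ε := by
  have hC0 : (0:ℝ) ≤ (2:ℝ) ^ ((l:ℝ) + (t : ℝ) - h) :=
    le_of_lt (Real.rpow_pos_of_pos (by norm_num) _)
  have hν0 : ∀ y, 0 ≤ pushD (iotaF l t D jstar) Q y := pushD_nonneg _ Q hQ.1
  have hνsum : ∑ y, pushD (iotaF l t D jstar) Q y = 1 := by rw [pushD_sum]; exact hQ.2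
  have hAne := advF_ne l t D hDt jstar f
  have hbase := hnm μX hX hXk (advF l t D jstar f) hAne
  have hcondν := SD_cond (D-1) nmExt (advF l t D jstar f) μX (pushD (iotaF l t D jstar) Q) hν0
  have hcondu := SD_cond (D-1) nmExt (advF l t D jstar f) μX (uniformD (BS (l+t))) (fun y => by
    unfold uniformD; positivity)
  have hνle : ∀ y, pushD (iotaF l t D jstar) Q y
      ≤ (2:ℝ) ^ ((l:ℝ) + (t : ℝ) - h) * uniformD (BS (l + t)) y := by
    intro y
    have h1 : pushD (iotaF l t D jstar) Q y ≤ (2:ℝ) ^ (-h) := by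
      unfold pushD
      by_cases hex : ∃ a, iotaF l t D jstar a = y
      · obtain ⟨a₀, ha₀⟩ := hex
        rw [Finset.sum_eq_single a₀]
        · rw [if_pos ha₀]; exact hQh a₀
        · intro a _ ha
          rw [if_neg]; intro hEq; exact ha (iotaF_inj l t D jstar (hEq.trans ha₀.symm))
        · intro hmem; exact absurd (Finset.mem_univ a₀) hmem
      · rw [Finset.sum_eq_zero]
        · exact le_of_lt (Real.rpow_pos_of_pos (by norm_num) _)
        · intro a _; rw [if_neg (fun hEq => hex ⟨a, hEq⟩)]
    have h2 : (2:ℝ) ^ ((l:ℝ) + (t : ℝ) - h) * uniformD (BS (l + t)) y = (2:ℝ) ^ (-h) := by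
      unfold uniformD
      rw [card_BS_real, ← Real.rpow_neg (by norm_num), ← Real.rpow_add (by norm_num)]
      congr 1; push_cast; ring
    rw [h2]; exact h1
  have hchain : SD (pushD (fun xy : BS n × BS (l+t) =>
        (nmExt xy.1 xy.2, fun i => nmExt xy.1 (advF l t D jstar f i xy.2), xy.2))
          (prodD μX (pushD (iotaF l t D jstar) Q)))
      (prodD (uniformD (BS m)) (pushD (fun xy : BS n × BS (l+t) =>
        ((fun i => nmExt xy.1 (advF l t D jstar f i xy.2)), xy.2))
          (prodD μX (pushD (iotaF l t D jstar) Q))))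
      ≤ (2:ℝ) ^ ((l:ℝ) + (t : ℝ) - h) * ε := by
    rw [hcondν]
    calc ∑ y, pushD (iotaF l t D jstar) Q y
            * SD (pushD (fun x => (nmExt x y, fun i => nmExt x (advF l t D jstar f i y))) μX)
            (prodD (uniformD (BS m)) (pushD (fun x => fun i => nmExt x (advF l t D jstar f i y)) μX))
        ≤ ∑ y, ((2:ℝ) ^ ((l:ℝ) + (t : ℝ) - h) * uniformD (BS (l+t)) y)
            * SD (pushD (fun x => (nmExt x y, fun i => nmExt x (advF l t D jstar f i y))) μX)
            (prodD (uniformD (BS m)) (pushD (fun x => fun i => nmExt x (advF l t D jstar f i y)) μX)) := by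
          apply Finset.sum_le_sum; intro y _
          exact mul_le_mul_of_nonneg_right (hνle y) (SD_nonneg _ _)
      _ = (2:ℝ) ^ ((l:ℝ) + (t : ℝ) - h) * ∑ y, uniformD (BS (l+t)) y
            * SD (pushD (fun x => (nmExt x y, fun i => nmExt x (advF l t D jstar f i y))) μX)
            (prodD (uniformD (BS m)) (pushD (fun x => fun i => nmExt x (advF l t D jstar f i y)) μX)) := by
          rw [Finset.mul_sum]; apply Finset.sum_congr rfl; intro y _; ring
      _ ≤ (2:ℝ) ^ ((l:ℝ) + (t : ℝ) - h) * ε := by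
          apply mul_le_mul_of_nonneg_left _ hC0
          rw [← hcondu]; exact hbase
  have hmap : (fun z : BS n × BS l => (fun zz : BS m × ((Fin (D-1) → BS m) × BS (l+t)) =>
        (fun i : Fin m => xor (zz.1 i) (bXor (fun i' => zz.2.1 i' i))))
          ((fun xy : BS n × BS (l+t) =>
            (nmExt xy.1 xy.2, fun i => nmExt xy.1 (advF l t D jstar f i xy.2), xy.2))
          (Prod.map id (iotaF l t D jstar) z)))
      = (fun xa : BS n × BS l => fun i : Fin m =>
         bXor (fun j : Fin D => nmExt xa.1 (Fin.append (f xa.2 j) (binRep D t j)) i)) := by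
    funext z
    obtain ⟨x, a⟩ := z
    funext i
    simp only [Prod.map, id_eq]
    have hAval : ∀ i' : Fin (D-1), advF l t D jstar f i' (iotaF l t D jstar a)
        = Fin.append (f a (jOf jstar i')) (binRep D t (jOf jstar i')) := by
      intro i'
      rw [advF, iotaF]
      rw [if_pos (append_last l t a _)]
      rw [append_first]
    have hιval : iotaF l t D jstar a = Fin.append (f a jstar) (binRep D t jstar) := by
      rw [iotaF, hf a]
    rw [bXor_split jstar (fun j : Fin D => nmExt x (Fin.append (f a j) (binRep D t j)) i)]
    congr 1
    · rw [hιval]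
    · congr 1
      funext i'
      rw [hAval i']
  have hfin1 : pushD (fun zz : BS m × ((Fin (D-1) → BS m) × BS (l+t)) =>
        (fun i : Fin m => xor (zz.1 i) (bXor (fun i' => zz.2.1 i' i))))
      (pushD (fun xy : BS n × BS (l+t) =>
        (nmExt xy.1 xy.2, fun i => nmExt xy.1 (advF l t D jstar f i xy.2), xy.2))
        (prodD μX (pushD (iotaF l t D jstar) Q)))
      = pushD (fun xa : BS n × BS l => fun i : Fin m =>
         bXor (fun j : Fin D => nmExt xa.1 (Fin.append (f xa.2 j) (binRep D t j)) i))
       (prodD μX Q) := by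
    rw [prodD_push, pushD_comp, pushD_comp, hmap]
  have hq1 : ∑ z, pushD (fun xy : BS n × BS (l+t) =>
      ((fun i => nmExt xy.1 (advF l t D jstar f i xy.2)), xy.2))
      (prodD μX (pushD (iotaF l t D jstar) Q)) z = 1 := by
    rw [pushD_sum, prodD_sum, hX.2, hνsum, mul_one]
  have hfin2 : pushD (fun zz : BS m × ((Fin (D-1) → BS m) × BS (l+t)) =>
        (fun i : Fin m => xor (zz.1 i) (bXor (fun i' => zz.2.1 i' i))))
      (prodD (uniformD (BS m)) (pushD (fun xy : BS n × BS (l+t) =>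
        ((fun i => nmExt xy.1 (advF l t D jstar f i xy.2)), xy.2))
        (prodD μX (pushD (iotaF l t D jstar) Q))))
      = uniformD (BS m) := by
    apply xor_uniform (fun w => fun i => bXor (fun i' => w.1 i' i)) _ hq1
  rw [← hfin1, ← hfin2]
  exact le_trans (SD_dataproc _ _ _) hchain

set_option maxHeartbeats 2000000 in
lemma perComp (n l t m D : ℕ) (hDt : D ≤ 2 ^ t) (k ε : ℝ) (hε : 0 ≤ ε)
    (nmExt : BS n → BS (l + t) → BS m) (hnm : IsNMEr (D-1) nmExt k ε)
    (μX : BS n → ℝ) (hX : IsDist μX) (hXk : mEntGe μX k)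
    (h : ℝ) (P : (Fin D → BS l) → ℝ) (hP : IsDist P)
    (hgood : ∃ j : Fin D, mEntGe (pushD (fun v => v j) P) h) :
    SD (pushD (fun xv : BS n × (Fin D → BS l) => fun i : Fin m =>
        bXor (fun j : Fin D => nmExt xv.1 (Fin.append (xv.2 j) (binRep D t j)) i)) (prodD μX P))
      (uniformD (BS m)) ≤ (2:ℝ) ^ ((l:ℝ) + (t:ℝ) - h) * ε := by
  obtain ⟨jstar, hj⟩ := hgood
  set Q : BS l → ℝ := pushD (fun v : Fin D → BS l => v jstar) P with hQdef
  have hQ0 : ∀ a, 0 ≤ Q a := pushD_nonneg _ P hP.1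
  have hQsum : ∑ a, Q a = 1 := by rw [hQdef, pushD_sum]; exact hP.2
  have hQdist : IsDist Q := ⟨hQ0, hQsum⟩
  have hQa : ∀ a, Q a = ∑ v, if v jstar = a then P v else 0 := by
    intro a; rw [hQdef]; unfold pushD
    apply Finset.sum_congr rfl; intro v _
    congr
  set c : BS l → (Fin D → BS l) → ℝ := fun a v =>
    if Q a = 0 then (if v = (fun _ => a) then 1 else 0)
    else (if v jstar = a then P v / Q a else 0) with hcdef
  have hc0 : ∀ a v, 0 ≤ c a v := by
    intro a v
    simp only [hcdef]
    split
    · split <;> norm_num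
    · split
      · exact div_nonneg (hP.1 v) (hQ0 a)
      · exact le_refl 0
  have hc1 : ∀ a, ∑ v, c a v = 1 := by
    intro a
    simp only [hcdef]
    by_cases hqa : Q a = 0
    · simp [hqa, Finset.sum_ite_eq']
    · simp only [hqa, if_false]
      have : ∀ v : Fin D → BS l, (if v jstar = a then P v / Q a else 0)
          = (if v jstar = a then P v else 0) / Q a := by
        intro v; split <;> simp
      simp only [this]
      rw [← Finset.sum_div, ← hQa, div_self hqa]
  have hcsupp : ∀ a v, c a v ≠ 0 → v jstar = a := by
    intro a v hne
    simp only [hcdef] at hne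
    by_cases hqa : Q a = 0
    · simp only [hqa, if_true] at hne
      by_cases hv : v = (fun _ => a)
      · rw [hv]
      · simp [hv] at hne
    · simp only [hqa, if_false] at hne
      by_cases hv : v jstar = a
      · exact hv
      · simp [hv] at hne
  have hPle : ∀ v, P v ≤ Q (v jstar) := by
    intro v
    rw [hQa]
    have := Finset.single_le_sum (f := fun v' : Fin D → BS l => if v' jstar = v jstar then P v' else 0)
      (fun v' _ => by
        show (0:ℝ) ≤ if v' jstar = v jstar then P v' else 0
        split; exacts [hP.1 v', le_refl 0]) (Finset.mem_univ v)
    simpa using this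
  have hProd : ∀ v, P v = Q (v jstar) * c (v jstar) v := by
    intro v
    by_cases hq : Q (v jstar) = 0
    · have hp0 : P v = 0 := le_antisymm (le_trans (hPle v) (le_of_eq hq)) (hP.1 v)
      rw [hq, zero_mul, hp0]
    · simp only [hcdef, hq, if_false, if_pos rfl, if_true]
      field_simp
  set wf : (BS l → (Fin D → BS l)) → ℝ := fun f => ∏ a, c a (f a) with hwfdef
  have hwf0 : ∀ f, 0 ≤ wf f := fun f => Finset.prod_nonneg fun a _ => hc0 a (f a)
  have hwf1 : ∑ f, wf f = 1 := by
    simp only [hwfdef]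
    rw [← Fintype.piFinset_univ, ← Finset.prod_univ_sum]
    exact Finset.prod_eq_one fun a _ => hc1 a
  have hkey : ∀ (a : BS l) (v : Fin D → BS l), (∑ f, if f a = v then wf f else 0) = c a v := by
    intro a v
    have hterm : ∀ f : BS l → (Fin D → BS l), (if f a = v then wf f else 0)
        = ∏ a', (if a' = a then (if f a' = v then c a (f a') else 0) else c a' (f a')) := by
      intro f
      by_cases hfa : f a = v
      · rw [if_pos hfa, hwfdef]
        apply Finset.prod_congr rfl
        intro a' _
        by_cases ha' : a' = a
        · subst ha'; simp [hfa]
        · simp [ha']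
      · rw [if_neg hfa]
        symm
        apply Finset.prod_eq_zero (Finset.mem_univ a)
        simp [hfa]
    have hps := Finset.prod_univ_sum (fun _ : BS l => (Finset.univ : Finset (Fin D → BS l)))
      (fun a' v' => if a' = a then (if v' = v then c a v' else 0) else c a' v')
    rw [Fintype.piFinset_univ] at hps
    calc (∑ f, if f a = v then wf f else 0)
        = ∑ f : BS l → Fin D → BS l,
            ∏ a', (if a' = a then (if f a' = v then c a (f a') else 0) else c a' (f a')) :=
          Finset.sum_congr rfl fun f _ => hterm f
      _ = ∏ a', ∑ v', (if a' = a then (if v' = v then c a v' else 0) else c a' v') := hps.symm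
      _ = c a v := by
          rw [← Finset.mul_prod_erase _ _ (Finset.mem_univ a)]
          have h1 : (∑ v', if a = a then (if v' = v then c a v' else 0) else c a v') = c a v := by
            simp [Finset.sum_ite_eq']
          have h2 : ∀ a' ∈ Finset.univ.erase a,
              (∑ v', if a' = a then (if v' = v then c a v' else 0) else c a' v') = 1 := by
            intro a' ha'
            have hne : a' ≠ a := (Finset.mem_erase.mp ha').1
            simp only [hne, if_false]
            exact hc1 a'
          rw [h1, Finset.prod_congr rfl h2, Finset.prod_const_one, mul_one]
  have hmix : ∀ v, P v = ∑ f, wf f * pushD f Q v := by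
    intro v
    have : ∀ f : BS l → (Fin D → BS l), wf f * pushD f Q v = ∑ a, (if f a = v then wf f else 0) * Q a := by
      intro f
      unfold pushD
      rw [Finset.mul_sum]
      apply Finset.sum_congr rfl
      intro a _
      split <;> simp
    simp only [this]
    rw [Finset.sum_comm]
    have h3 : ∀ a, ∑ f, (if f a = v then wf f else 0) * Q a = c a v * Q a := by
      intro a; rw [← Finset.sum_mul, hkey]
    simp only [h3]
    rw [Finset.sum_eq_single (v jstar)]
    · rw [hProd v]; ring
    · intro a _ ha
      have : c a v = 0 := by
        by_contra hne
        exact ha (hcsupp a v hne).symm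
      rw [this, zero_mul]
    · intro hmem; exact absurd (Finset.mem_univ _) hmem
  have hdecomp : prodD μX P = fun z : BS n × (Fin D → BS l) =>
      ∑ f, wf f * prodD μX (pushD f Q) z := by
    funext z
    unfold prodD
    rw [hmix z.2, Finset.mul_sum]
    apply Finset.sum_congr rfl
    intro f _
    ring
  set Gm : BS n × (Fin D → BS l) → BS m := fun xv => fun i : Fin m =>
      bXor (fun j : Fin D => nmExt xv.1 (Fin.append (xv.2 j) (binRep D t j)) i) with hGm
  calc SD (pushD Gm (prodD μX P)) (uniformD (BS m))
      = SD (fun z => ∑ f, wf f * pushD Gm (prodD μX (pushD f Q)) z) (uniformD (BS m)) := by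
        rw [hdecomp, pushD_linear]
    _ ≤ ∑ f, wf f * SD (pushD Gm (prodD μX (pushD f Q))) (uniformD (BS m)) :=
        SD_convex wf hwf0 hwf1 _ _
    _ ≤ ∑ f, wf f * ((2:ℝ) ^ ((l:ℝ) + (t:ℝ) - h) * ε) := by
        apply Finset.sum_le_sum
        intro f _
        by_cases hwfz : wf f = 0
        · rw [hwfz, zero_mul, zero_mul]
        · apply mul_le_mul_of_nonneg_left _ (hwf0 f)
          have hfj : ∀ a, f a jstar = a := by
            intro a
            by_contra hne
            apply hwfz
            rw [hwfdef]
            apply Finset.prod_eq_zero (Finset.mem_univ a)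
            by_contra hcz
            exact hne (hcsupp a (f a) hcz)
          have hPF := perF n l t m D hDt k ε hε nmExt hnm μX hX hXk h Q hQdist hj jstar f hfj
          rw [hGm, prodD_push, pushD_comp]
          exact hPF
    _ = (2:ℝ) ^ ((l:ℝ) + (t:ℝ) - h) * ε := by
        rw [← Finset.sum_mul, hwf1, one_mul]


theorem stmt_8
    (n l m k D : ℕ) (hD : 2 ≤ D) (b δ : ℝ) (hb : 2 < b) (hδ : 0 < δ)
    (ε ε' : ℝ) (hε0 : 0 < ε) (hε1 : ε < 1) (hε'0 : 0 < ε') (hε'1 : ε' < 1)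
    (Cond : BS n → (Fin D → BS l))
    (hCond : ∀ μY : BS n → ℝ, IsDist μY → mEntGe μY (δ * n) →
      ∃ (t' : ℕ) (w : Fin t' → ℝ) (Di : Fin t' → ((Fin D → BS l) → ℝ)),
        (∀ i, 0 ≤ w i) ∧ (∑ i, w i = 1) ∧ (∀ i, IsDist (Di i)) ∧
        (∀ i, ∃ j : Fin D, mEntGe (pushD (fun v => v j) (Di i)) ((b / (b + 1)) * l)) ∧
        SD (pushD Cond μY) (fun z => ∑ i, w i * Di i z) ≤ ε')
    (nmExt : BS n → BS (l + Nat.clog 2 D) → BS m)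
    (hnm : IsNMEr (D - 1) nmExt (k:ℝ) ε) :
    ∀ (μX μY : BS n → ℝ),
      IsDist μX → mEntGe μX (k:ℝ) → IsDist μY → mEntGe μY (δ * n) →
      SD (pushD (fun xy : BS n × BS n => fun i : Fin m =>
            bXor (fun j : Fin D =>
              nmExt xy.1 (Fin.append (Cond xy.2 j) (binRep D (Nat.clog 2 D) j)) i))
           (prodD μX μY))
         (uniformD (BS m))
        ≤ ε' + (2:ℝ) ^ ((l:ℝ) + (Nat.clog 2 D : ℝ) - (b / (b + 1)) * l) * ε := by
  intro μX μY hdX hkX hdY hmY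
  obtain ⟨t', w, Di, hw0, hw1, hDi, hgood, hSD⟩ := hCond μY hdY hmY
  have hDt : D ≤ 2 ^ Nat.clog 2 D := Nat.le_pow_clog (by norm_num) D
  have hε : (0:ℝ) ≤ ε := le_of_lt hε0
  set Gm : BS n × (Fin D → BS l) → BS m := fun xv => fun i : Fin m =>
      bXor (fun j : Fin D => nmExt xv.1 (Fin.append (xv.2 j) (binRep D (Nat.clog 2 D) j)) i) with hGm
  have step1 : pushD (fun xy : BS n × BS n => fun i : Fin m =>
        bXor (fun j : Fin D =>
          nmExt xy.1 (Fin.append (Cond xy.2 j) (binRep D (Nat.clog 2 D) j)) i))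
      (prodD μX μY) = pushD Gm (prodD μX (pushD Cond μY)) := by
    rw [prodD_push, pushD_comp]
    rfl
  rw [step1]
  have hmid : prodD μX (fun z => ∑ i, w i * Di i z)
      = fun z : BS n × (Fin D → BS l) => ∑ i, w i * prodD μX (Di i) z := by
    funext z
    unfold prodD
    rw [Finset.mul_sum]
    apply Finset.sum_congr rfl
    intro i _
    ring
  have hC : (2:ℝ) ^ ((l:ℝ) + (Nat.clog 2 D : ℝ) - (b / (b + 1)) * l) * ε ≥ 0 :=
    mul_nonneg (le_of_lt (Real.rpow_pos_of_pos (by norm_num) _)) hε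
  have hterm1 : SD (pushD Gm (prodD μX (pushD Cond μY)))
      (pushD Gm (prodD μX (fun z => ∑ i, w i * Di i z))) ≤ ε' := by
    refine le_trans (SD_dataproc _ _ _) ?_
    rw [SD_prodD_left μX hdX]
    exact hSD
  have hterm2 : SD (pushD Gm (prodD μX (fun z => ∑ i, w i * Di i z))) (uniformD (BS m))
      ≤ (2:ℝ) ^ ((l:ℝ) + (Nat.clog 2 D : ℝ) - (b / (b + 1)) * l) * ε := by
    rw [hmid, pushD_linear]
    refine le_trans (SD_convex w hw0 hw1 _ _) ?_
    refine le_trans (Finset.sum_le_sum fun i _ => mul_le_mul_of_nonneg_left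
      (perComp n l (Nat.clog 2 D) m D hDt k ε hε nmExt hnm μX hdX hkX
        ((b / (b + 1)) * l) (Di i) (hDi i) (hgood i)) (hw0 i)) ?_
    rw [← Finset.sum_mul, hw1, one_mul]
  exact le_trans (SD_triangle _ _ _) (add_le_add hterm1 hterm2)

end
end

section
/- Let n1, k, s, ℓ be natural numbers, ε ∈ (0,1), and set n2 = 2(s+1). Fix an injective map ι : {0,1}^s → GF(2^{s+1}) \ {0} and a fixed F_2-linear identification of GF(2^{s+1}) with F_2^{s+1}, and define Enc : {0,1}^s → F_2^{n2} by Enc(y) = (ι(y), ι(y)³). Suppose f : {0,1}^{n1} → F_2^{n2} is such that for every (n1,k)-source X and every independent distribution W on F_2^{n2} with min-entropy at least n2/2 − ℓ, the bit ⟨f(X), W⟩ (inner product over F_2) is ε-close to uniform. Then the function nmExt : {0,1}^{n1} × {0,1}^s → {0,1} defined by nmExt(x,y) = ⟨f(x), Enc(y)⟩ is a (k, ε')-non-malleable extractor with ε' ≤ 64·2^{−ℓ} + 8ε. -/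
open Finset
open scoped Classical

noncomputable section

/-- The inner product over `F_2` of two vectors in `F_2^s × F_2^s ≅ F_2^{2s}`. -/
def ipPair {s : ℕ} (v w : (Fin s → ZMod 2) × (Fin s → ZMod 2)) : ZMod 2 :=
  (∑ i, v.1 i * w.1 i) + (∑ i, v.2 i * w.2 i)

-- ## auxiliary
def sgn (z : ZMod 2) : ℝ := if z = 0 then 1 else -1

lemma zmod2_cases (a : ZMod 2) : a = 0 ∨ a = 1 := by revert a; decide

lemma z11 : (1 + 1 : ZMod 2) = 0 := by decide
lemma sgn_zero : sgn 0 = 1 := if_pos rfl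
lemma sgn_one : sgn 1 = -1 := if_neg (by decide)
lemma zne : (0 : ZMod 2) ≠ 1 := by decide
lemma zne' : (1 : ZMod 2) ≠ 0 := by decide

lemma abs_sgn (a : ZMod 2) : |sgn a| = 1 := by
  rcases zmod2_cases a with rfl | rfl <;>
    simp only [sgn_zero, sgn_one] <;> norm_num

lemma sum_zmod2 (F : ZMod 2 → ℝ) : ∑ a, F a = F 0 + F 1 := by
  have h : (univ : Finset (ZMod 2)) = {0, 1} := by decide
  rw [h, Finset.sum_insert (by decide), Finset.sum_singleton]

lemma pt (a b m c : ZMod 2) (r : ℝ) :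
    (if a = m then (1:ℝ) else 0) * (if b = c then 1 else 0) * r
      - (1/2) * ((if b = c then (1:ℝ) else 0) * r)
    = r/4 * (sgn m * sgn a + sgn (m+c) * sgn (a+b)) := by
  rcases zmod2_cases a with rfl | rfl <;> rcases zmod2_cases b with rfl | rfl <;>
    rcases zmod2_cases m with rfl | rfl <;> rcases zmod2_cases c with rfl | rfl <;>
    simp only [zero_add, add_zero, z11, sgn_zero, sgn_one, if_pos rfl, zne, zne',
      if_true, if_false, if_neg zne, if_neg zne'] <;> ring

lemma ipPair_add_right {s : ℕ} (v w w' : (Fin s → ZMod 2) × (Fin s → ZMod 2)) :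
    ipPair v (w + w') = ipPair v w + ipPair v w' := by
  simp [ipPair, mul_add, Finset.sum_add_distrib]; ring

lemma fiber2 {s : ℕ} {K : Type} [Field K] (h2 : (2:K) = 0)
    (ι : BS s → K) (hι : Function.Injective ι)
    (A : BS s → BS s) (hA : ∀ y, A y ≠ y) (v : K × K) :
    (univ.filter fun y => (ι y + ι (A y), ι y ^ 3 + ι (A y) ^ 3) = v).card ≤ 2 := by
  set T := univ.filter fun y : BS s => (ι y + ι (A y), ι y ^ 3 + ι (A y) ^ 3) = v with hT
  rcases T.eq_empty_or_nonempty with h | ⟨y₀, hy₀⟩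
  · simp [h]
  set a := ι y₀ + ι (A y₀) with ha'
  set b := ι y₀ ^ 3 + ι (A y₀) ^ 3 with hb'
  have hv : v = (a, b) := ((mem_filter.1 hy₀).2).symm
  have ha : a ≠ 0 := by
    intro h0
    apply hA y₀
    apply hι
    have h0' : ι y₀ + ι (A y₀) = 0 := by rw [← ha']; exact h0
    linear_combination h0' - (ι y₀) * h2
  have hAy0 : ι (A y₀) = ι y₀ + a := by linear_combination -ha' - (ι y₀) * h2
  have hb0 : ι y₀ ^ 3 + (ι y₀ + a) ^ 3 = b := by rw [← hAy0]
  have key : ∀ y ∈ T, ι y = ι y₀ ∨ ι y = ι y₀ + a := by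
    intro y hy
    have hgy := (mem_filter.1 hy).2
    rw [hv] at hgy
    have h1 : ι y + ι (A y) = a := (Prod.ext_iff.1 hgy).1
    have h3 : ι y ^ 3 + ι (A y) ^ 3 = b := (Prod.ext_iff.1 hgy).2
    have hAy : ι (A y) = ι y + a := by linear_combination h1 - (ι y) * h2
    have hb1 : ι y ^ 3 + (ι y + a) ^ 3 = b := by rw [← hAy]; exact h3
    have hz : (ι y - ι y₀) * (a * (ι y + ι y₀ + a)) = 0 := by
      linear_combination hb1 - hb0
        - (ι y ^ 3 - ι y₀ ^ 3 + a * (ι y ^ 2 - ι y₀ ^ 2) + a ^ 2 * (ι y - ι y₀)) * h2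
    rcases mul_eq_zero.1 hz with h | h
    · exact Or.inl (sub_eq_zero.1 h)
    · rcases mul_eq_zero.1 h with h | h
      · exact absurd h ha
      · exact Or.inr (by linear_combination h - (ι y₀ + a) * h2)
  calc T.card ≤ ({ι y₀, ι y₀ + a} : Finset K).card :=
        Finset.card_le_card_of_injOn ι (fun y hy => by
          rcases key y hy with h | h <;> simp [h]) (hι.injOn)
    _ ≤ 2 := by
        apply le_trans (Finset.card_insert_le _ _); simp
lemma zite_add (z : ZMod 2) (r : ℝ) {d1 : Decidable (z = 0)} {d2 : Decidable (z = 1)} :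
    (@ite _ (z = 0) d1 r 0) + (@ite _ (z = 1) d2 r 0) = r := by
  rcases zmod2_cases z with rfl | rfl
  · rw [if_pos rfl, if_neg zne, add_zero]
  · rw [if_neg zne', if_pos rfl, zero_add]

lemma zite_sub (z : ZMod 2) (r : ℝ) {d1 : Decidable (z = 0)} {d2 : Decidable (z = 1)} :
    (@ite _ (z = 0) d1 r 0) - (@ite _ (z = 1) d2 r 0) = r * sgn z := by
  rcases zmod2_cases z with rfl | rfl
  · rw [if_pos rfl, if_neg zne, sgn_zero]; ring
  · rw [if_neg zne', if_pos rfl, sgn_one]; ring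

-- bnd_T : conditional bias bound via hf
lemma bnd_T (n1 s ℓ k : ℕ) (ε : ℝ)
    (f : BS n1 → (Fin (s+1) → ZMod 2) × (Fin (s+1) → ZMod 2))
    (hf : ∀ (μX : BS n1 → ℝ)
        (μW : ((Fin (s + 1) → ZMod 2) × (Fin (s + 1) → ZMod 2)) → ℝ),
      IsDist μX → mEntGe μX (k:ℝ) → IsDist μW →
      mEntGe μW ((2 * ((s:ℝ) + 1)) / 2 - (ℓ:ℝ)) →
      SD (pushD (fun xw : BS n1 × ((Fin (s + 1) → ZMod 2) × (Fin (s + 1) → ZMod 2)) =>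
            ipPair (f xw.1) xw.2) (prodD μX μW))
         (uniformD (ZMod 2)) ≤ ε)
    (μX : BS n1 → ℝ) (hd : IsDist μX) (hk : mEntGe μX (k:ℝ))
    (g : BS s → (Fin (s+1) → ZMod 2) × (Fin (s+1) → ZMod 2))
    (hg : ∀ v, (((univ.filter fun y => g y = v).card : ℝ)) ≤ 2)
    (T : Finset (BS s)) (hT : 2 * (2:ℝ)^(((s:ℝ)+1) - (ℓ:ℝ)) ≤ T.card) :
    |∑ y ∈ T, ∑ x, μX x * sgn (ipPair (f x) (g y))| ≤ 2 * ε * T.card := by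
  have hTpos : (0:ℝ) < T.card := lt_of_lt_of_le (by positivity) hT
  have hTne : (T.card : ℝ) ≠ 0 := ne_of_gt hTpos
  set μW : ((Fin (s + 1) → ZMod 2) × (Fin (s + 1) → ZMod 2)) → ℝ :=
    fun v => ((T.filter fun y => g y = v).card : ℝ) / T.card with hμW
  have hcnt : ∀ v, ((T.filter fun y => g y = v).card : ℝ) ≤ 2 := by
    intro v
    refine le_trans ?_ (hg v)
    exact_mod_cast Nat.cast_le.2
      (Finset.card_le_card (Finset.filter_subset_filter _ (Finset.subset_univ T)))
  have hWsum : ∑ v, μW v = 1 := by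
    have hcard : T.card = ∑ v : ((Fin (s + 1) → ZMod 2) × (Fin (s + 1) → ZMod 2)),
        (T.filter fun y => g y = v).card :=
      Finset.card_eq_sum_card_fiberwise (fun y _ => mem_univ (g y))
    rw [hμW]
    rw [← Finset.sum_div]
    rw [← Nat.cast_sum, ← hcard]
    exact div_self hTne
  have hWdist : IsDist μW := ⟨fun v => by positivity, hWsum⟩
  have hWent : mEntGe μW ((2 * ((s:ℝ) + 1)) / 2 - (ℓ:ℝ)) := by
    intro v
    have h1 : μW v ≤ 2 / T.card := by
      rw [hμW]
      exact (div_le_div_iff_of_pos_right hTpos).2 (hcnt v)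
    have h2 : 2 / (T.card:ℝ) ≤ 2 / (2 * (2:ℝ)^(((s:ℝ)+1) - (ℓ:ℝ))) :=
      div_le_div_of_nonneg_left (by norm_num) (by positivity) hT
    have h3 : 2 / (2 * (2:ℝ)^(((s:ℝ)+1) - (ℓ:ℝ)))
        = (2:ℝ) ^ (-((2 * ((s:ℝ) + 1)) / 2 - (ℓ:ℝ))) := by
      have hxp : -((2 * ((s:ℝ) + 1)) / 2 - (ℓ:ℝ)) = -(((s:ℝ)+1) - (ℓ:ℝ)) := by ring
      rw [hxp, Real.rpow_neg (by norm_num : (0:ℝ) ≤ 2)]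
      have hX : (0:ℝ) < (2:ℝ)^(((s:ℝ)+1) - (ℓ:ℝ)) := Real.rpow_pos_of_pos (by norm_num) _
      field_simp
    exact le_trans h1 (h3 ▸ h2)
  have hsd := hf μX μW hd hk hWdist hWent
  set q := pushD (fun xw : BS n1 × ((Fin (s + 1) → ZMod 2) × (Fin (s + 1) → ZMod 2)) =>
      ipPair (f xw.1) xw.2) (prodD μX μW) with hq
  have hq1 : q 0 + q 1 = 1 := by
    rw [hq]; simp only [pushD]
    rw [← Finset.sum_add_distrib]
    refine Eq.trans (Finset.sum_congr rfl fun a _ => zite_add (ipPair (f a.1) a.2) (prodD μX μW a)) ?_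
    rw [Fintype.sum_prod_type]
    simp only [prodD]
    calc ∑ x, ∑ v, μX x * μW v = ∑ x, μX x * ∑ v, μW v := by
          exact Finset.sum_congr rfl fun x _ => (Finset.mul_sum _ _ _).symm
      _ = 1 := by rw [hWsum]; simp [hd.2]
  have hqd : q 0 - q 1 = ∑ v, μW v * ∑ x, μX x * sgn (ipPair (f x) v) := by
    rw [hq]; simp only [pushD]
    rw [← Finset.sum_sub_distrib]
    refine Eq.trans (Finset.sum_congr rfl fun a _ => zite_sub (ipPair (f a.1) a.2) (prodD μX μW a)) ?_
    rw [Fintype.sum_prod_type]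
    rw [Finset.sum_comm]
    refine Finset.sum_congr rfl fun v _ => ?_
    rw [Finset.mul_sum]
    refine Finset.sum_congr rfl fun x _ => ?_
    simp only [prodD]; ring
  have hSD : SD q (uniformD (ZMod 2)) = (|q 0 - 1/2| + |q 1 - 1/2|)/2 := by
    rw [SD, sum_zmod2 (fun a => |q a - uniformD (ZMod 2) a|)]
    have : ∀ b : ZMod 2, uniformD (ZMod 2) b = 1/2 := by
      intro b; simp [uniformD, ZMod.card]
    rw [this 0, this 1]
  rw [hSD] at hsd
  have habs : |q 0 - q 1| ≤ 2 * ε := by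
    have h7 : q 0 - q 1 = (q 0 - 1/2) + (1/2 - q 1) := by ring
    rw [h7]
    have h4 := abs_add_le (q 0 - 1/2) (1/2 - q 1)
    have h5 : |1/2 - q 1| = |q 1 - 1/2| := abs_sub_comm _ _
    rw [h5] at h4
    linarith
  have hfib : ∑ y ∈ T, ∑ x, μX x * sgn (ipPair (f x) (g y))
      = T.card * ∑ v, μW v * ∑ x, μX x * sgn (ipPair (f x) v) := by
    rw [← Finset.sum_fiberwise_of_maps_to (fun y _ => Finset.mem_univ (g y))
      (fun y => ∑ x, μX x * sgn (ipPair (f x) (g y)))]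
    rw [Finset.mul_sum]
    refine Finset.sum_congr rfl fun v _ => ?_
    rw [show ∑ y ∈ T.filter (fun y => g y = v), (∑ x, μX x * sgn (ipPair (f x) (g y)))
        = ∑ _y ∈ T.filter (fun y => g y = v), ∑ x, μX x * sgn (ipPair (f x) v) from
      Finset.sum_congr rfl (fun y hy => by rw [(Finset.mem_filter.1 hy).2])]
    rw [Finset.sum_const, nsmul_eq_mul]
    rw [hμW]
    field_simp
  rw [hfib, abs_mul, Nat.abs_cast]
  have hle : |∑ v, μW v * ∑ x, μX x * sgn (ipPair (f x) v)| ≤ 2*ε := by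
    rw [← hqd]; exact habs
  calc (T.card:ℝ) * |∑ v, μW v * ∑ x, μX x * sgn (ipPair (f x) v)|
      ≤ (T.card:ℝ) * (2*ε) := mul_le_mul_of_nonneg_left hle (le_of_lt hTpos)
    _ = 2 * ε * T.card := by ring

lemma bnd_sum (n1 s ℓ k : ℕ) (ε : ℝ) (hε0 : 0 < ε)
    (f : BS n1 → (Fin (s+1) → ZMod 2) × (Fin (s+1) → ZMod 2))
    (hf : ∀ (μX : BS n1 → ℝ)
        (μW : ((Fin (s + 1) → ZMod 2) × (Fin (s + 1) → ZMod 2)) → ℝ),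
      IsDist μX → mEntGe μX (k:ℝ) → IsDist μW →
      mEntGe μW ((2 * ((s:ℝ) + 1)) / 2 - (ℓ:ℝ)) →
      SD (pushD (fun xw : BS n1 × ((Fin (s + 1) → ZMod 2) × (Fin (s + 1) → ZMod 2)) =>
            ipPair (f xw.1) xw.2) (prodD μX μW))
         (uniformD (ZMod 2)) ≤ ε)
    (μX : BS n1 → ℝ) (hd : IsDist μX) (hk : mEntGe μX (k:ℝ))
    (g : BS s → (Fin (s+1) → ZMod 2) × (Fin (s+1) → ZMod 2))
    (hg : ∀ v, (((univ.filter fun y => g y = v).card : ℝ)) ≤ 2) :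
    ∑ y, |∑ x, μX x * sgn (ipPair (f x) (g y))|
      ≤ ((Fintype.card (BS s)):ℝ) * (4*ε + 8*(2:ℝ)^(-(ℓ:ℝ))) := by
  set C : BS s → ℝ := fun y => ∑ x, μX x * sgn (ipPair (f x) (g y)) with hC
  have hB1 : ∀ y, |C y| ≤ 1 := by
    intro y
    calc |C y| ≤ ∑ x, |μX x * sgn (ipPair (f x) (g y))| := Finset.abs_sum_le_sum_abs _ _
      _ = ∑ x, μX x := by
          refine Finset.sum_congr rfl fun x _ => ?_
          rw [abs_mul, abs_sgn, mul_one, abs_of_nonneg (hd.1 x)]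
      _ = 1 := hd.2
  set θ : ℝ := 2 * (2:ℝ)^(((s:ℝ)+1) - (ℓ:ℝ)) with hθ
  have hθpos : 0 < θ := by positivity
  set N : ℝ := ((Fintype.card (BS s)):ℝ) with hN
  have hNag : ∀ T : Finset (BS s), (T.card : ℝ) ≤ N := by
    intro T; rw [hN]; exact_mod_cast Finset.card_le_univ T
  have hNnn : 0 ≤ N := le_trans (by positivity) (hNag ∅)
  -- bound for any sign-constant part
  have key : ∀ T : Finset (BS s), ((∀ y ∈ T, 0 ≤ C y) ∨ (∀ y ∈ T, C y ≤ 0)) →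
      ∑ y ∈ T, |C y| ≤ 2*ε*N + θ := by
    intro T hsign
    by_cases hT : θ ≤ (T.card:ℝ)
    · have h1 : ∑ y ∈ T, |C y| = |∑ y ∈ T, C y| := by
        rcases hsign with hs | hs
        · rw [abs_of_nonneg (Finset.sum_nonneg hs)]
          exact Finset.sum_congr rfl fun y hy => abs_of_nonneg (hs y hy)
        · rw [abs_of_nonpos (Finset.sum_nonpos hs), ← Finset.sum_neg_distrib]
          exact Finset.sum_congr rfl fun y hy => abs_of_nonpos (hs y hy)
      rw [h1]
      have h2 := bnd_T n1 s ℓ k ε f hf μX hd hk g hg T hT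
      have h3 : 2 * ε * (T.card:ℝ) ≤ 2*ε*N :=
        mul_le_mul_of_nonneg_left (hNag T) (by positivity)
      calc |∑ y ∈ T, C y| ≤ 2 * ε * T.card := h2
        _ ≤ 2*ε*N := h3
        _ ≤ 2*ε*N + θ := by linarith
    · push_neg at hT
      calc ∑ y ∈ T, |C y| ≤ ∑ _y ∈ T, (1:ℝ) := Finset.sum_le_sum (fun y _ => hB1 y)
        _ = T.card := by simp
        _ ≤ θ := le_of_lt hT
        _ ≤ 2*ε*N + θ := by nlinarith
  have h1 := key (univ.filter fun y => 0 ≤ C y) (Or.inl fun y hy => (mem_filter.1 hy).2)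
  have h2 := key (univ.filter fun y => ¬ 0 ≤ C y)
    (Or.inr fun y hy => le_of_not_ge (mem_filter.1 hy).2)
  have htot : ∑ y, |C y| ≤ 4*ε*N + 2*θ := by
    rw [← Finset.sum_filter_add_sum_filter_not univ (fun y => 0 ≤ C y) (fun y => |C y|)]
    linarith
  have hθN : θ = N * (4 * (2:ℝ)^(-(ℓ:ℝ))) := by
    rw [hθ, hN]
    have hcard : ((Fintype.card (BS s)):ℝ) = (2:ℝ)^(s:ℕ) := by
      simp [Fintype.card_fun]
    rw [hcard]
    have hsp : ((s:ℝ)+1) - (ℓ:ℝ) = (s:ℝ) + 1 + (-(ℓ:ℝ)) := by ring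
    rw [hsp, Real.rpow_add (by norm_num : (0:ℝ) < 2),
      Real.rpow_add (by norm_num : (0:ℝ) < 2), Real.rpow_one, Real.rpow_natCast]
    ring
  have hfin : 4*ε*N + 2*θ = N * (4*ε + 8*(2:ℝ)^(-(ℓ:ℝ))) := by rw [hθN]; ring
  linarith

lemma sd_le (n1 s : ℕ) (μX : BS n1 → ℝ) (E : BS n1 → BS s → ZMod 2) (A : BS s → BS s) :
    SD (pushD (fun xy : BS n1 × BS s => (E xy.1 xy.2, E xy.1 (A xy.2), xy.2))
          (prodD μX (uniformD (BS s))))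
       (prodD (uniformD (ZMod 2))
         (pushD (fun xy : BS n1 × BS s => (E xy.1 (A xy.2), xy.2)) (prodD μX (uniformD (BS s)))))
    ≤ (∑ y, (Fintype.card (BS s):ℝ)⁻¹ *
        (|∑ x, μX x * sgn (E x y)| + |∑ x, μX x * sgn (E x y + E x (A y))|)) / 2 := by
  set u : ℝ := (Fintype.card (BS s):ℝ)⁻¹ with hu
  have hupos : 0 ≤ u := by positivity
  set P := pushD (fun xy : BS n1 × BS s => (E xy.1 xy.2, E xy.1 (A xy.2), xy.2))
    (prodD μX (uniformD (BS s))) with hP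
  set Q := prodD (uniformD (ZMod 2))
    (pushD (fun xy : BS n1 × BS s => (E xy.1 (A xy.2), xy.2)) (prodD μX (uniformD (BS s)))) with hQ
  have key : ∀ m c : ZMod 2, ∀ y : BS s, P (m, c, y) - Q (m, c, y)
      = u/4 * (sgn m * (∑ x, μX x * sgn (E x y))
          + sgn (m + c) * (∑ x, μX x * sgn (E x y + E x (A y)))) := by
    intro m c y
    have hPz : P (m, c, y) = ∑ x, (if E x y = m then (1:ℝ) else 0) *
        (if E x (A y) = c then 1 else 0) * (μX x * u) := by
      rw [hP]; simp only [pushD, Fintype.sum_prod_type]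
      refine Finset.sum_congr rfl fun x _ => ?_
      rw [Finset.sum_eq_single y
        (fun y' _ hy' => by rw [if_neg (by simp [Prod.ext_iff, hy'])])
        (fun hy => absurd (Finset.mem_univ y) hy)]
      simp only [prodD, uniformD]
      by_cases h1 : E x y = m <;> by_cases h2 : E x (A y) = c
      · rw [if_pos (by rw [h1, h2]), if_pos h1, if_pos h2]; ring
      · rw [if_neg (by simp [Prod.ext_iff, h2]), if_pos h1, if_neg h2]; ring
      · rw [if_neg (by simp [Prod.ext_iff, h1]), if_neg h1]; ring
      · rw [if_neg (by simp [Prod.ext_iff, h1]), if_neg h1]; ring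
    have hu2 : uniformD (ZMod 2) m = 1/2 := by
      simp [uniformD, ZMod.card]
    have hQz : Q (m, c, y) = ∑ x, (1/2) * ((if E x (A y) = c then (1:ℝ) else 0) * (μX x * u)) := by
      rw [hQ]; simp only [prodD, pushD, Fintype.sum_prod_type]
      rw [hu2, Finset.mul_sum]
      refine Finset.sum_congr rfl fun x _ => ?_
      rw [Finset.sum_eq_single y
        (fun y' _ hy' => by rw [if_neg (by simp [Prod.ext_iff, hy'])])
        (fun hy => absurd (Finset.mem_univ y) hy)]
      simp only [prodD, uniformD]
      by_cases h2 : E x (A y) = c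
      · rw [if_pos (by simp [Prod.ext_iff, h2]), if_pos h2, hu]; ring
      · rw [if_neg (by simp [Prod.ext_iff, h2]), if_neg h2]; ring
    rw [hPz, hQz, ← Finset.sum_sub_distrib]
    refine Eq.trans (Finset.sum_congr rfl fun x _ =>
      pt (E x y) (E x (A y)) m c (μX x * u)) ?_
    calc ∑ x, (μX x * u)/4 * (sgn m * sgn (E x y) + sgn (m + c) * sgn (E x y + E x (A y)))
        = ∑ x, (u/4 * (sgn m * (μX x * sgn (E x y))
            + sgn (m + c) * (μX x * sgn (E x y + E x (A y))))) :=
          Finset.sum_congr rfl fun x _ => by ring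
      _ = u/4 * ∑ x, (sgn m * (μX x * sgn (E x y))
            + sgn (m + c) * (μX x * sgn (E x y + E x (A y)))) := (Finset.mul_sum _ _ _).symm
      _ = u/4 * (sgn m * (∑ x, μX x * sgn (E x y))
            + sgn (m + c) * (∑ x, μX x * sgn (E x y + E x (A y)))) := by
          rw [Finset.sum_add_distrib, ← Finset.mul_sum, ← Finset.mul_sum]
  have hb : ∀ z : ZMod 2 × ZMod 2 × BS s, |P z - Q z|
      ≤ u/4 * (|∑ x, μX x * sgn (E x z.2.2)|
          + |∑ x, μX x * sgn (E x z.2.2 + E x (A z.2.2))|) := by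
    rintro ⟨m, c, y⟩
    rw [key m c y, abs_mul, abs_of_nonneg (by positivity : (0:ℝ) ≤ u/4)]
    refine mul_le_mul_of_nonneg_left ?_ (by positivity)
    refine le_trans (abs_add_le _ _) ?_
    rw [abs_mul, abs_mul, abs_sgn, abs_sgn, one_mul, one_mul]
  have hsum : ∑ z : ZMod 2 × ZMod 2 × BS s, |P z - Q z|
      ≤ ∑ y, u * (|∑ x, μX x * sgn (E x y)| + |∑ x, μX x * sgn (E x y + E x (A y))|) := by
    calc ∑ z : ZMod 2 × ZMod 2 × BS s, |P z - Q z|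
        ≤ ∑ z : ZMod 2 × ZMod 2 × BS s, u/4 * (|∑ x, μX x * sgn (E x z.2.2)|
            + |∑ x, μX x * sgn (E x z.2.2 + E x (A z.2.2))|) :=
          Finset.sum_le_sum (fun z _ => hb z)
      _ = ∑ _m : ZMod 2, ∑ w : ZMod 2 × BS s, u/4 * (|∑ x, μX x * sgn (E x w.2)|
            + |∑ x, μX x * sgn (E x w.2 + E x (A w.2))|) := Fintype.sum_prod_type _
      _ = ∑ _m : ZMod 2, ∑ _c : ZMod 2, ∑ y, u/4 * (|∑ x, μX x * sgn (E x y)|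
            + |∑ x, μX x * sgn (E x y + E x (A y))|) :=
          Finset.sum_congr rfl fun m _ => Fintype.sum_prod_type _
      _ = ∑ y, u * (|∑ x, μX x * sgn (E x y)| + |∑ x, μX x * sgn (E x y + E x (A y))|) := by
          simp only [sum_zmod2, ← Finset.sum_add_distrib]
          exact Finset.sum_congr rfl fun y _ => by ring
  rw [SD]
  linarith


/-- Here `K` plays the role of `GF(2^{s+1})` (any field of that cardinality),
`e` is the fixed `F_2`-linear identification of `K` with `F_2^{s+1}`, and
`F_2^{n2}` (with `n2 = 2(s+1)`) is represented as `F_2^{s+1} × F_2^{s+1}`. -/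
theorem stmt_9
    (n1 k s ℓ : ℕ) (ε : ℝ) (hε0 : 0 < ε) (hε1 : ε < 1)
    (K : Type) [Field K] [Fintype K] (hK : Fintype.card K = 2 ^ (s + 1))
    (ι : BS s → K) (hι : Function.Injective ι) (hι0 : ∀ y, ι y ≠ 0)
    (e : K ≃+ (Fin (s + 1) → ZMod 2))
    (f : BS n1 → (Fin (s + 1) → ZMod 2) × (Fin (s + 1) → ZMod 2))
    (hf : ∀ (μX : BS n1 → ℝ)
        (μW : ((Fin (s + 1) → ZMod 2) × (Fin (s + 1) → ZMod 2)) → ℝ),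
      IsDist μX → mEntGe μX (k:ℝ) → IsDist μW →
      mEntGe μW ((2 * ((s:ℝ) + 1)) / 2 - (ℓ:ℝ)) →
      SD (pushD (fun xw : BS n1 × ((Fin (s + 1) → ZMod 2) × (Fin (s + 1) → ZMod 2)) =>
            ipPair (f xw.1) xw.2) (prodD μX μW))
         (uniformD (ZMod 2)) ≤ ε) :
    IsNME (fun x y => ipPair (f x) (e (ι y), e (ι y ^ 3))) (k:ℝ)
      (64 * (2:ℝ) ^ (-(ℓ:ℝ)) + 8 * ε) := by
  intro μX hμX hk A hA
  have h2K : (2:K) = 0 := by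
    have hc : ((Fintype.card K : ℕ) : K) = 0 := FiniteField.cast_card_eq_zero K
    rw [hK] at hc
    push_cast at hc
    exact (pow_eq_zero_iff (Nat.succ_ne_zero s)).1 hc
  refine le_trans (sd_le n1 s μX (fun x y => ipPair (f x) (e (ι y), e (ι y ^ 3))) A) ?_
  beta_reduce
  -- fiber bounds
  have hg1 : ∀ v : (Fin (s + 1) → ZMod 2) × (Fin (s + 1) → ZMod 2),
      (((univ.filter fun y : BS s => (e (ι y), e (ι y ^ 3)) = v).card : ℝ)) ≤ 2 := by
    intro v
    have h1 : (univ.filter fun y : BS s => (e (ι y), e (ι y ^ 3)) = v).card ≤ 1 := by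
      refine Finset.card_le_one.2 ?_
      intro y hy y' hy'
      have ha := (mem_filter.1 hy).2
      have hb := (mem_filter.1 hy').2
      apply hι; apply e.injective
      exact congrArg Prod.fst (ha.trans hb.symm)
    have : (univ.filter fun y : BS s => (e (ι y), e (ι y ^ 3)) = v).card ≤ 2 :=
      le_trans h1 one_le_two
    exact_mod_cast this
  have hg2 : ∀ v : (Fin (s + 1) → ZMod 2) × (Fin (s + 1) → ZMod 2),
      (((univ.filter fun y : BS s =>
        (e (ι y), e (ι y ^ 3)) + (e (ι (A y)), e (ι (A y) ^ 3)) = v).card : ℝ)) ≤ 2 := by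
    intro v
    have hiff : ∀ y ∈ (univ : Finset (BS s)),
        ((e (ι y), e (ι y ^ 3)) + (e (ι (A y)), e (ι (A y) ^ 3)) = v
          ↔ (ι y + ι (A y), ι y ^ 3 + ι (A y) ^ 3) = (e.symm v.1, e.symm v.2)) := by
      intro y _
      constructor
      · intro h
        rw [← h, Prod.ext_iff]
        constructor
        · show ι y + ι (A y) = e.symm (e (ι y) + e (ι (A y)))
          rw [← map_add, e.symm_apply_apply]
        · show ι y ^ 3 + ι (A y) ^ 3 = e.symm (e (ι y ^ 3) + e (ι (A y) ^ 3))
          rw [← map_add, e.symm_apply_apply]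
      · intro h
        have h1 : ι y + ι (A y) = e.symm v.1 := (Prod.ext_iff.1 h).1
        have h2 : ι y ^ 3 + ι (A y) ^ 3 = e.symm v.2 := (Prod.ext_iff.1 h).2
        calc (e (ι y), e (ι y ^ 3)) + (e (ι (A y)), e (ι (A y) ^ 3))
            = (e (ι y) + e (ι (A y)), e (ι y ^ 3) + e (ι (A y) ^ 3)) := rfl
          _ = (e (ι y + ι (A y)), e (ι y ^ 3 + ι (A y) ^ 3)) := by rw [map_add, map_add]
          _ = v := by rw [h1, h2, e.apply_symm_apply, e.apply_symm_apply]
    rw [Finset.filter_congr hiff]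
    have := fiber2 h2K ι hι A hA (e.symm v.1, e.symm v.2)
    exact_mod_cast this
  have hBa := bnd_sum n1 s ℓ k ε hε0 f hf μX hμX hk
    (fun y => (e (ι y), e (ι y ^ 3))) hg1
  have hBb := bnd_sum n1 s ℓ k ε hε0 f hf μX hμX hk
    (fun y => (e (ι y), e (ι y ^ 3)) + (e (ι (A y)), e (ι (A y) ^ 3))) hg2
  beta_reduce at hBa hBb
  set N : ℝ := ((Fintype.card (BS s)):ℝ) with hN
  have hNpos : (0:ℝ) < N := by rw [hN]; exact_mod_cast Fintype.card_pos
  set εl : ℝ := (2:ℝ)^(-(ℓ:ℝ)) with hεl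
  have hεlpos : 0 < εl := Real.rpow_pos_of_pos (by norm_num) _
  -- rewrite the xor-bias sums
  have hrw : ∀ y : BS s, (∑ x, μX x * sgn (ipPair (f x) (e (ι y), e (ι y ^ 3))
        + ipPair (f x) (e (ι (A y)), e (ι (A y) ^ 3))))
      = ∑ x, μX x * sgn (ipPair (f x)
          ((e (ι y), e (ι y ^ 3)) + (e (ι (A y)), e (ι (A y) ^ 3)))) := by
    intro y
    refine Finset.sum_congr rfl fun x _ => ?_
    rw [ipPair_add_right]
  have hgoal : (∑ y, (N)⁻¹ * (|∑ x, μX x * sgn (ipPair (f x) (e (ι y), e (ι y ^ 3)))|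
        + |∑ x, μX x * sgn (ipPair (f x) (e (ι y), e (ι y ^ 3))
            + ipPair (f x) (e (ι (A y)), e (ι (A y) ^ 3)))|))
      ≤ 2 * (4*ε + 8*εl) := by
    have step1 : ∀ y : BS s, (N)⁻¹ * (|∑ x, μX x * sgn (ipPair (f x) (e (ι y), e (ι y ^ 3)))|
        + |∑ x, μX x * sgn (ipPair (f x) (e (ι y), e (ι y ^ 3))
            + ipPair (f x) (e (ι (A y)), e (ι (A y) ^ 3)))|)
      = (N)⁻¹ * (|∑ x, μX x * sgn (ipPair (f x) (e (ι y), e (ι y ^ 3)))|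
        + |∑ x, μX x * sgn (ipPair (f x)
            ((e (ι y), e (ι y ^ 3)) + (e (ι (A y)), e (ι (A y) ^ 3))))|) := by
      intro y; rw [hrw y]
    calc ∑ y, (N)⁻¹ * (|∑ x, μX x * sgn (ipPair (f x) (e (ι y), e (ι y ^ 3)))|
        + |∑ x, μX x * sgn (ipPair (f x) (e (ι y), e (ι y ^ 3))
            + ipPair (f x) (e (ι (A y)), e (ι (A y) ^ 3)))|)
        = ∑ y, (N)⁻¹ * (|∑ x, μX x * sgn (ipPair (f x) (e (ι y), e (ι y ^ 3)))|
        + |∑ x, μX x * sgn (ipPair (f x)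
            ((e (ι y), e (ι y ^ 3)) + (e (ι (A y)), e (ι (A y) ^ 3))))|) :=
          Finset.sum_congr rfl fun y _ => step1 y
      _ = (N)⁻¹ * ((∑ y, |∑ x, μX x * sgn (ipPair (f x) (e (ι y), e (ι y ^ 3)))|)
          + ∑ y, |∑ x, μX x * sgn (ipPair (f x)
            ((e (ι y), e (ι y ^ 3)) + (e (ι (A y)), e (ι (A y) ^ 3))))|) := by
          rw [← Finset.mul_sum, Finset.sum_add_distrib]
      _ ≤ (N)⁻¹ * ((N * (4*ε + 8*εl)) + (N * (4*ε + 8*εl))) := by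
          refine mul_le_mul_of_nonneg_left (add_le_add hBa hBb) (by positivity)
      _ = 2 * (4*ε + 8*εl) := by field_simp; ring
  calc (∑ y, (N)⁻¹ * (|∑ x, μX x * sgn (ipPair (f x) (e (ι y), e (ι y ^ 3)))|
        + |∑ x, μX x * sgn (ipPair (f x) (e (ι y), e (ι y ^ 3))
            + ipPair (f x) (e (ι (A y)), e (ι (A y) ^ 3)))|)) / 2
      ≤ (2 * (4*ε + 8*εl)) / 2 := by linarith
    _ ≤ 64 * εl + 8 * ε := by linarith

end
end
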